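/- arXiv:1311.5127 — 3 statements merged into one kernel-verified Lean document; each statement's English description precedes it below -/
import Mathlib

section
/- (Gronwall-type lemma) Let J = (a,b) ⊂ ℝ be an open interval and let f, φ, ψ be non-negative real-valued functions on J with f bounded and φ, ψ integrable on J. Assume there exist ω ≥ 0 and θ ∈ [0,1) such that for all λ ∈ J, f(λ) ≤ ω + ∫_λ^b (φ(τ) f(τ)^θ + ψ(τ) f(τ)) dτ. Then for all λ ∈ J, f(λ) ≤ [ ω^{1−θ} + (1−θ) ∫_λ^b φ(μ) e^{(θ−1)∫_μ^b ψ(τ)dτ} dμ ]^{1/(1−θ)} · e^{∫_λ^b ψ(τ)dτ}. -/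
open Set MeasureTheory Filter Topology

lemma tangent_rpow {x y p : ℝ} (hy : 0 < y) (hxy : y ≤ x) (hp0 : 0 ≤ p) (hp1 : p ≤ 1) :
    x ^ p - y ^ p ≤ p * y ^ (p - 1) * (x - y) := by
  have hx : 0 < x := hy.trans_le hxy
  have hq : 0 < x / y := div_pos hx hy
  have hs : (-1 : ℝ) ≤ x / y - 1 := by linarith
  have h := rpow_one_add_le_one_add_mul_self hs hp0 hp1
  rw [add_sub_cancel] at h
  have hyp : (0:ℝ) < y ^ p := Real.rpow_pos_of_pos hy p
  have hxp : x ^ p ≤ y ^ p * (1 + p * (x / y - 1)) := by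
    have hdiv : (x / y) ^ p = x ^ p / y ^ p := Real.div_rpow hx.le hy.le p
    rw [hdiv] at h
    calc x ^ p = (x ^ p / y ^ p) * y ^ p := by field_simp
    _ ≤ (1 + p * (x / y - 1)) * y ^ p := mul_le_mul_of_nonneg_right h hyp.le
    _ = y ^ p * (1 + p * (x / y - 1)) := by ring
  have hkey : y ^ p * (1 + p * (x / y - 1)) = y ^ p + p * (y ^ p / y) * (x - y) := by
    field_simp
  rw [Real.rpow_sub_one hy.ne' p]
  rw [hkey] at hxp
  linarith

set_option maxHeartbeats 2000000 in
/-- Gronwall-type lemma: if `f, φ, ψ ≥ 0` on `J = (a,b)`, `f` bounded (and measurable),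
`φ, ψ ∈ L¹(J)`, `ω ≥ 0`, `θ ∈ [0,1)` and
`f(λ) ≤ ω + ∫_λ^b (φ(τ) f(τ)^θ + ψ(τ) f(τ)) dτ` for all `λ ∈ J`, then for all `λ ∈ J`,
`f(λ) ≤ [ω^{1−θ} + (1−θ)∫_λ^b φ(μ) e^{(θ−1)∫_μ^b ψ} dμ]^{1/(1−θ)} · e^{∫_λ^b ψ}`. -/
theorem stmt_14 (a b : ℝ) (hab : a < b) (f φ ψ : ℝ → ℝ)
    (hf0 : ∀ x ∈ Ioo a b, 0 ≤ f x) (hφ0 : ∀ x ∈ Ioo a b, 0 ≤ φ x)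
    (hψ0 : ∀ x ∈ Ioo a b, 0 ≤ ψ x)
    (hfmeas : Measurable f) (hfbdd : ∃ M : ℝ, ∀ x ∈ Ioo a b, f x ≤ M)
    (hφint : IntegrableOn φ (Ioo a b)) (hψint : IntegrableOn ψ (Ioo a b))
    (ω θ : ℝ) (hω : 0 ≤ ω) (hθ0 : 0 ≤ θ) (hθ1 : θ < 1)
    (hineq : ∀ l ∈ Ioo a b,
      f l ≤ ω + ∫ τ in Ioo l b, (φ τ * f τ ^ θ + ψ τ * f τ)) :
    ∀ l ∈ Ioo a b,
      f l ≤ (ω ^ (1 - θ) +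
          (1 - θ) * ∫ μ in Ioo l b, φ μ * Real.exp ((θ - 1) * ∫ τ in Ioo μ b, ψ τ)) ^
            (1 / (1 - θ)) *
        Real.exp (∫ τ in Ioo l b, ψ τ) := by
  intro l hl
  obtain ⟨M, hM⟩ := hfbdd
  have hp : (0:ℝ) < 1 - θ := by linarith
  set M' : ℝ := max M 1 with hM'def
  have hM' : ∀ x ∈ Ioo a b, f x ≤ M' := fun x hx => (hM x hx).trans (le_max_left _ _)
  have hM'1 : (1:ℝ) ≤ M' := le_max_right _ _
  set g : ℝ → ℝ := fun τ => φ τ * f τ ^ θ + ψ τ * f τ with hg_def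
  have hg0 : ∀ τ ∈ Ioo a b, 0 ≤ g τ := by
    intro τ hτ
    have h1 : 0 ≤ f τ ^ θ := Real.rpow_nonneg (hf0 τ hτ) θ
    exact add_nonneg (mul_nonneg (hφ0 τ hτ) h1) (mul_nonneg (hψ0 τ hτ) (hf0 τ hτ))
  -- integrability of g on Ioo a b
  have hmem_ae : ∀ᵐ x ∂(volume.restrict (Ioo a b)), x ∈ Ioo a b :=
    ae_restrict_mem measurableSet_Ioo
  have hgint : IntegrableOn g (Ioo a b) := by
    have h1 : IntegrableOn (fun τ => φ τ * f τ ^ θ) (Ioo a b) := by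
      have := hφint.bdd_mul (f := fun τ => f τ ^ θ) (c := M' ^ θ)
        ((hfmeas.pow_const θ).aestronglyMeasurable)
        (by
          filter_upwards [hmem_ae] with x hx
          rw [Real.norm_eq_abs, abs_of_nonneg (Real.rpow_nonneg (hf0 x hx) θ)]
          exact Real.rpow_le_rpow (hf0 x hx) (hM' x hx) hθ0)
      exact this.congr (ae_of_all _ fun x => mul_comm _ _)
    have h2 : IntegrableOn (fun τ => ψ τ * f τ) (Ioo a b) := by
      have := hψint.bdd_mul (f := f) (c := M')
        (hfmeas.aestronglyMeasurable)
        (by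
          filter_upwards [hmem_ae] with x hx
          rw [Real.norm_eq_abs, abs_of_nonneg (hf0 x hx)]
          exact hM' x hx)
      exact this.congr (ae_of_all _ fun x => mul_comm _ _)
    exact h1.add h2
  have hgIcc : IntegrableOn g (Icc a b) := (integrableOn_Icc_iff_integrableOn_Ioo).mpr hgint
  have hψIcc : IntegrableOn ψ (Icc a b) := (integrableOn_Icc_iff_integrableOn_Ioo).mpr hψint
  have hφIcc : IntegrableOn φ (Icc a b) := (integrableOn_Icc_iff_integrableOn_Ioo).mpr hφint
  -- splitting lemma
  have hsplit : ∀ h : ℝ → ℝ, IntegrableOn h (Icc a b) → ∀ s t : ℝ, a ≤ s → s ≤ t → t < b →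
      (∫ x in Ioo s b, h x) = (∫ x in Ioc s t, h x) + ∫ x in Ioo t b, h x := by
    intro h hint s t has hst htb
    have hu : Ioc s t ∪ Ioo t b = Ioo s b := Ioc_union_Ioo_eq_Ioo hst htb
    have hdisj : Disjoint (Ioc s t) (Ioo t b) :=
      Set.disjoint_left.mpr fun x hx1 hx2 => absurd hx1.2 (not_le.mpr hx2.1)
    have hi1 : IntegrableOn h (Ioc s t) :=
      hint.mono_set (fun x hx => ⟨has.trans_lt hx.1 |>.le, hx.2.trans htb.le⟩)
    have hi2 : IntegrableOn h (Ioo t b) :=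
      hint.mono_set (fun x hx => ⟨(has.trans hst).trans hx.1.le, hx.2.le⟩)
    rw [← hu, setIntegral_union hdisj measurableSet_Ioo hi1 hi2]
  -- G and its properties
  set G : ℝ → ℝ := fun s => ∫ τ in Ioo s b, g τ with hG_def
  have hG0 : ∀ s ∈ Ioo a b, 0 ≤ G s := by
    intro s hs
    exact setIntegral_nonneg measurableSet_Ioo fun x hx =>
      hg0 x ⟨hs.1.trans hx.1, hx.2⟩
  set P : ℝ → ℝ := fun s => ∫ τ in Ioo s b, ψ τ with hP_def
  have hP0 : ∀ s ∈ Ioo a b, 0 ≤ P s := by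
    intro s hs
    exact setIntegral_nonneg measurableSet_Ioo fun x hx =>
      hψ0 x ⟨hs.1.trans hx.1, hx.2⟩
  set E : ℝ → ℝ := fun s => Real.exp ((θ - 1) * P s) with hE_def
  have hEpos : ∀ s, 0 < E s := fun s => Real.exp_pos _
  have hE1 : ∀ s ∈ Ioo a b, E s ≤ 1 := by
    intro s hs
    rw [hE_def]
    exact Real.exp_le_one_iff.mpr (mul_nonpos_of_nonpos_of_nonneg (by linarith) (hP0 s hs))
  have hPsplit : ∀ s t : ℝ, a < s → s ≤ t → t < b →
      P s = (∫ x in Ioc s t, ψ x) + P t := fun s t has hst htb =>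
    hsplit ψ hψIcc s t has.le hst htb
  have hEmono : ∀ s t : ℝ, a < s → s ≤ t → t < b → E s ≤ E t := by
    intro s t has hst htb
    have h1 : (0:ℝ) ≤ ∫ x in Ioc s t, ψ x := by
      refine setIntegral_nonneg measurableSet_Ioc fun x hx => hψ0 x ⟨has.trans hx.1, hx.2.trans_lt htb⟩
    have := hPsplit s t has hst htb
    rw [hE_def]
    exact Real.exp_le_exp.mpr (by nlinarith)
  -- W = φ * E, integrable
  set W : ℝ → ℝ := fun μ => φ μ * E μ with hW_def
  have hW0 : ∀ x ∈ Ioo a b, 0 ≤ W x := fun x hx =>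
    mul_nonneg (hφ0 x hx) (hEpos x).le
  have hWint : IntegrableOn W (Ioo a b) := by
    have hEcont : ContinuousOn E (Ioo a b) := by
      have hprim : ContinuousOn (fun x => ∫ t in Ioc a x, ψ t) (Icc a b) :=
        intervalIntegral.continuousOn_primitive hψIcc
      have hPeq : ∀ x ∈ Ioo a b, P x = (∫ τ in Ioo a b, ψ τ) - ∫ t in Ioc a x, ψ t := by
        intro x hx
        have := hsplit ψ hψIcc a x le_rfl hx.1.le hx.2
        rw [hP_def]; simp only at this ⊢; linarith
      have : ContinuousOn (fun x => Real.exp ((θ - 1) *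
          ((∫ τ in Ioo a b, ψ τ) - ∫ t in Ioc a x, ψ t))) (Ioo a b) := by
        apply Real.continuous_exp.comp_continuousOn
        exact (continuousOn_const.sub (hprim.mono Ioo_subset_Icc_self)).const_smul (θ - 1)
      exact ContinuousOn.congr this fun x hx => by rw [hE_def]; simp only; rw [hPeq x hx]
    have hEm : AEStronglyMeasurable E (volume.restrict (Ioo a b)) :=
      hEcont.aestronglyMeasurable measurableSet_Ioo
    have := hφint.bdd_mul (f := E) (c := 1) hEm
      (by
        filter_upwards [hmem_ae] with x hx
        rw [Real.norm_eq_abs, abs_of_nonneg (hEpos x).le]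
        exact hE1 x hx)
    exact this.congr (ae_of_all _ fun x => mul_comm _ _)
  have hWIcc : IntegrableOn W (Icc a b) := (integrableOn_Icc_iff_integrableOn_Ioo).mpr hWint
  set Iφ : ℝ → ℝ := fun s => ∫ μ in Ioo s b, W μ with hIφ_def
  have hIφ0 : ∀ s ∈ Ioo a b, 0 ≤ Iφ s := by
    intro s hs
    exact setIntegral_nonneg measurableSet_Ioo fun x hx => hW0 x ⟨hs.1.trans hx.1, hx.2⟩
  -- sequences tending to b
  have hseq_mem : ∀ s, s ∈ Ioo a b → ∀ n : ℕ, (b - (b - s)/(n+2)) ∈ Ioo s b := by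
    intro s hs n
    have hbs : 0 < b - s := by linarith [hs.2]
    have hn2 : (0:ℝ) < n + 2 := by positivity
    constructor
    · have h1 : (b - s)/(n+2) < b - s := by
        rw [div_lt_iff₀ hn2]; nlinarith
      linarith
    · have h2 : 0 < (b - s)/(n+2) := by positivity
      linarith
  have hseq_tend : ∀ s, s ∈ Ioo a b → ∀ h : ℝ → ℝ, IntegrableOn h (Icc a b) →
      Tendsto (fun n : ℕ => ∫ x in Ioc s (b - (b - s)/(n+2)), h x) atTop
        (𝓝 (∫ x in Ioo s b, h x)) := by
    intro s hs h hint
    have hbs : 0 < b - s := by linarith [hs.2]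
    have hmono : Monotone (fun n : ℕ => Ioc s (b - (b - s)/(n+2))) := by
      intro m n hmn
      apply Ioc_subset_Ioc le_rfl
      have h1 : (0:ℝ) < m + 2 := by positivity
      have h2 : (0:ℝ) < n + 2 := by positivity
      have : (b - s)/(n+2) ≤ (b - s)/(m+2) := by
        apply div_le_div_of_nonneg_left hbs.le h1
        exact_mod_cast by exact_mod_cast (by exact_mod_cast Nat.add_le_add_right hmn 2 : (m+2:ℕ) ≤ n+2)
      linarith
    have hunion : (⋃ n : ℕ, Ioc s (b - (b - s)/(n+2))) = Ioo s b := by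
      apply Subset.antisymm
      · exact iUnion_subset fun n => fun x hx =>
          ⟨hx.1, lt_of_le_of_lt hx.2 (hseq_mem s hs n).2⟩
      · intro x hx
        obtain ⟨n, hn⟩ := exists_nat_gt ((b - s)/(b - x))
        have hbx : 0 < b - x := by linarith [hx.2]
        refine mem_iUnion.mpr ⟨n, hx.1, ?_⟩
        have h2 : (0:ℝ) < n + 2 := by positivity
        have : (b - s)/(n + 2) ≤ b - x := by
          rw [div_le_iff₀ h2]
          have : (b - s)/(b-x) < n + 2 := by push_cast; linarith
          rw [div_lt_iff₀ hbx] at this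
          nlinarith
        linarith
    have := tendsto_setIntegral_of_monotone (fun n : ℕ => measurableSet_Ioc) hmono
      (by rw [hunion]; exact hint.mono_set (fun x hx => ⟨(hs.1.trans hx.1).le, hx.2.le⟩))
    rwa [hunion] at this
  -- the key quantitative estimate for ω₀ > 0 and ε > 0
  have key : ∀ ω₀ : ℝ, 0 < ω₀ → ω ≤ ω₀ → ∀ ε : ℝ, 0 < ε →
      f l ≤ (ω₀ ^ (1-θ) + (1+ε)^θ * ((1-θ) * Iφ l) +
        ε * ((1-θ) * (ω₀ + G a) ^ (1-θ) * P l)) ^ (1/(1-θ)) * Real.exp (P l) := by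
    intro ω₀ hω₀ hωle ε hε
    set U : ℝ := ω₀ + G a with hU_def
    set u : ℝ → ℝ := fun s => ω₀ + G s with hu_def
    have hu_app : ∀ x, u x = ω₀ + G x := fun _ => rfl
    have hul : ∀ s ∈ Ioo a b, ω₀ ≤ u s := by
      intro s hs; rw [hu_app]; linarith [hG0 s hs]
    have hupos : ∀ s ∈ Ioo a b, 0 < u s := fun s hs => lt_of_lt_of_le hω₀ (hul s hs)
    have hfu : ∀ s ∈ Ioo a b, f s ≤ u s := by
      intro s hs
      refine (hineq s hs).trans ?_
      rw [hu_app]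
      exact add_le_add_left hωle _
    have husplit : ∀ s t : ℝ, s ∈ Ioo a b → s ≤ t → t < b →
        u s = (∫ x in Ioc s t, g x) + u t := by
      intro s t hs hst htb
      rw [hu_app, hu_app]
      have := hsplit g hgIcc s t hs.1.le hst htb
      rw [hG_def]; simp only; linarith [this]
    have hIocg0 : ∀ s t : ℝ, s ∈ Ioo a b → t < b → 0 ≤ ∫ x in Ioc s t, g x := by
      intro s t hs htb
      exact setIntegral_nonneg measurableSet_Ioc fun x hx =>
        hg0 x ⟨hs.1.trans hx.1, hx.2.trans_lt htb⟩
    have humono : ∀ s t : ℝ, s ∈ Ioo a b → t ∈ Ioo a b → s ≤ t → u t ≤ u s := by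
      intro s t hs ht hst
      have := husplit s t hs hst ht.2
      linarith [hIocg0 s t hs ht.2]
    have hGa0 : 0 ≤ G a :=
      setIntegral_nonneg measurableSet_Ioo fun x hx => hg0 x hx
    have hU0 : 0 < U := by rw [hU_def]; linarith
    have huU : ∀ s ∈ Ioo a b, u s ≤ U := by
      intro s hs
      rw [hu_app, hU_def]
      have : G s ≤ G a := by
        refine setIntegral_mono_set hgint ?_ ?_
        · filter_upwards [hmem_ae] with x hx using hg0 x hx
        · exact HasSubset.Subset.eventuallyLE (Ioo_subset_Ioo hs.1.le le_rfl)
      linarith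
    set V : ℝ → ℝ := fun s => u s ^ (1-θ) * E s with hV_def
    have hV_app : ∀ s, V s = u s ^ (1-θ) * E s := fun _ => rfl
    -- the one-step estimate
    have hstep : ∀ s t : ℝ, s ∈ Ioo a b → t ∈ Ioo a b → s ≤ t → u s ≤ (1+ε) * u t →
        V s ≤ V t + (1+ε)^θ * ((1-θ) * ∫ x in Ioc s t, W x) +
          ε * ((1-θ) * (u t)^(1-θ) * ∫ x in Ioc s t, ψ x) := by
      intro s t hs ht hst hue
      have hsub : Ioc s t ⊆ Ioo a b := fun x hx => ⟨hs.1.trans hx.1, hx.2.trans_lt ht.2⟩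
      set Φ := ∫ x in Ioc s t, φ x with hΦ_def
      set Ψ := ∫ x in Ioc s t, ψ x with hΨ_def
      have hΦ0 : 0 ≤ Φ := setIntegral_nonneg measurableSet_Ioc fun x hx => hφ0 x (hsub hx)
      have hΨ0 : 0 ≤ Ψ := setIntegral_nonneg measurableSet_Ioc fun x hx => hψ0 x (hsub hx)
      have hA : 0 < u s := hupos s hs
      have hB : 0 < u t := hupos t ht
      have hBA : u t ≤ u s := humono s t hs ht hst
      have hiφ : IntegrableOn φ (Ioc s t) := hφint.mono_set hsub
      have hiψ : IntegrableOn ψ (Ioc s t) := hψint.mono_set hsub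
      have hΔ : u s = (∫ x in Ioc s t, g x) + u t := husplit s t hs hst ht.2
      have hgb : (∫ x in Ioc s t, g x) ≤ (u s)^θ * Φ + u s * Ψ := by
        have hle : ∀ x ∈ Ioc s t, g x ≤ φ x * (u s)^θ + ψ x * u s := by
          intro x hx
          have hxm : x ∈ Ioo a b := hsub hx
          have hfx : f x ≤ u s := (hfu x hxm).trans (humono s x hs hxm hx.1.le)
          have h1 : f x ^ θ ≤ (u s)^θ := Real.rpow_le_rpow (hf0 x hxm) hfx hθ0
          rw [hg_def]
          exact add_le_add (mul_le_mul_of_nonneg_left h1 (hφ0 x hxm))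
            (mul_le_mul_of_nonneg_left hfx (hψ0 x hxm))
        have h2 := setIntegral_mono_on (hgint.mono_set hsub)
          ((hiφ.mul_const _).add (hiψ.mul_const _)) measurableSet_Ioc hle
        calc (∫ x in Ioc s t, g x)
            ≤ ∫ x in Ioc s t, (φ x * (u s)^θ + ψ x * u s) := h2
          _ = Φ * (u s)^θ + Ψ * u s := by
              rw [integral_add (hiφ.mul_const _) (hiψ.mul_const _),
                integral_mul_const, integral_mul_const]
          _ = (u s)^θ * Φ + u s * Ψ := by ring
      have hconc : (u s)^(1-θ) - (u t)^(1-θ) ≤ (1-θ) * (u t)^(-θ) * (u s - u t) := by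
        have h := tangent_rpow hB hBA hp.le (by linarith)
        have hexp : (1-θ) - 1 = -θ := by ring
        rwa [hexp] at h
      have hEst : E s * (1 + (1-θ)*Ψ) ≤ E t := by
        have hPs : P s = Ψ + P t := hPsplit s t hs.1 hst ht.2
        have hEt : E t = E s * Real.exp ((1-θ)*Ψ) := by
          rw [hE_def]; simp only
          rw [← Real.exp_add]; congr 1; rw [hPs]; ring
        have h1 : 1 + (1-θ)*Ψ ≤ Real.exp ((1-θ)*Ψ) := by
          have := Real.add_one_le_exp ((1-θ)*Ψ); linarith
        rw [hEt]
        exact mul_le_mul_of_nonneg_left h1 (hEpos s).le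
      have hEΦ : E s * Φ ≤ ∫ x in Ioc s t, W x := by
        have hle : ∀ x ∈ Ioc s t, φ x * E s ≤ W x := by
          intro x hx
          have hxm := hsub hx
          rw [hW_def]
          exact mul_le_mul_of_nonneg_left (hEmono s x hs.1 hx.1.le hxm.2) (hφ0 x hxm)
        have h2 := setIntegral_mono_on (hiφ.mul_const (E s)) (hWint.mono_set hsub)
          measurableSet_Ioc hle
        calc E s * Φ = ∫ x in Ioc s t, φ x * E s := by rw [integral_mul_const]; ring
          _ ≤ _ := h2
      -- assemble
      set Bθ : ℝ := (u t)^(-θ) with hBθ_def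
      have hBθpos : 0 < Bθ := Real.rpow_pos_of_pos hB _
      have hF7 : Bθ * (u t)^θ = 1 := by
        rw [hBθ_def, ← Real.rpow_add hB]
        norm_num
      have hF8 : Bθ * u t = (u t)^(1-θ) := by
        rw [hBθ_def]
        nth_rewrite 2 [show u t = (u t)^(1:ℝ) from (Real.rpow_one _).symm]
        rw [← Real.rpow_add hB]
        congr 1
        ring
      have hF6 : (u s)^θ ≤ (1+ε)^θ * (u t)^θ := by
        have h1 : (u s)^θ ≤ ((1+ε) * u t)^θ := Real.rpow_le_rpow hA.le hue hθ0
        rwa [Real.mul_rpow (by linarith) hB.le] at h1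
      have hes : 0 < E s := hEpos s
      have hes1 : E s ≤ 1 := hE1 s hs
      have hIW : 0 ≤ ∫ x in Ioc s t, W x :=
        setIntegral_nonneg measurableSet_Ioc fun x hx => hW0 x (hsub hx)
      have hb1 : 0 < (u t)^(1-θ) := Real.rpow_pos_of_pos hB _
      have ha1 : 0 < (u s)^(1-θ) := Real.rpow_pos_of_pos hA _
      have hε1 : (0:ℝ) < (1+ε)^θ := Real.rpow_pos_of_pos (by linarith) _
      rw [hV_app, hV_app]
      have h1 : (u t)^(1-θ) * (E s * (1 + (1-θ)*Ψ)) ≤ (u t)^(1-θ) * E t :=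
        mul_le_mul_of_nonneg_left hEst hb1.le
      have h2 : ((u s)^(1-θ) - (u t)^(1-θ)) * E s ≤ ((1-θ) * Bθ * (u s - u t)) * E s :=
        mul_le_mul_of_nonneg_right hconc hes.le
      have h3 : (u s) - u t ≤ (u s)^θ * Φ + u s * Ψ := by linarith [hgb, hIocg0 s t hs ht.2]
      have h4 : ((1-θ) * Bθ * (u s - u t)) * E s ≤
          ((1-θ) * Bθ * ((u s)^θ * Φ + u s * Ψ)) * E s := by
        have := mul_le_mul_of_nonneg_left h3 (by positivity : (0:ℝ) ≤ (1-θ) * Bθ)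
        exact mul_le_mul_of_nonneg_right (by linarith) hes.le
      have h5 : (1-θ) * Bθ * ((u s)^θ * Φ) * E s ≤ (1-θ) * (1+ε)^θ * (Φ * E s) := by
        have hBs : Bθ * (u s)^θ ≤ (1+ε)^θ := by
          have := mul_le_mul_of_nonneg_left hF6 hBθpos.le
          calc Bθ * (u s)^θ ≤ Bθ * ((1+ε)^θ * (u t)^θ) := this
            _ = (1+ε)^θ * (Bθ * (u t)^θ) := by ring
            _ = (1+ε)^θ := by rw [hF7]; ring
        have hco : (0:ℝ) ≤ (1-θ) * Φ * E s := by positivity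
        nlinarith [mul_le_mul_of_nonneg_right hBs hco]
      have h6 : (1-θ) * Bθ * (u s * Ψ) * E s - (1-θ) * (u t)^(1-θ) * Ψ * E s ≤
          ε * ((1-θ) * (u t)^(1-θ) * Ψ) * E s := by
        have hBu : Bθ * u s ≤ (1+ε) * (u t)^(1-θ) := by
          have := mul_le_mul_of_nonneg_left hue hBθpos.le
          calc Bθ * u s ≤ Bθ * ((1+ε) * u t) := this
            _ = (1+ε) * (Bθ * u t) := by ring
            _ = (1+ε) * (u t)^(1-θ) := by rw [hF8]
        have hco : (0:ℝ) ≤ (1-θ) * Ψ * E s := by positivity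
        nlinarith [mul_le_mul_of_nonneg_right hBu hco]
      have h7 : (1-θ) * (1+ε)^θ * (Φ * E s) ≤ (1+ε)^θ * ((1-θ) * ∫ x in Ioc s t, W x) := by
        have hco : (0:ℝ) ≤ (1-θ) * (1+ε)^θ := by positivity
        nlinarith [mul_le_mul_of_nonneg_left hEΦ hco]
      have h8 : ε * ((1-θ) * (u t)^(1-θ) * Ψ) * E s ≤ ε * ((1-θ) * (u t)^(1-θ) * Ψ) := by
        have hco : (0:ℝ) ≤ ε * ((1-θ) * (u t)^(1-θ) * Ψ) := by positivity
        nlinarith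
      linarith [h1, h2, h4, h5, h6, h7, h8]
    -- base-case estimate near b
    have hnear : ∀ s ∈ Ioo a b, G s ≤ ε * ω₀ →
        V s ≤ ω₀^(1-θ) + (1+ε)^θ * ((1-θ) * Iφ s) + ε * ((1-θ) * U^(1-θ) * P s) := by
      intro s hs hGs
      set tn : ℕ → ℝ := fun n => b - (b - s)/(n+2) with htn_def
      have htn_mem : ∀ n, tn n ∈ Ioo s b := hseq_mem s hs
      have htn_Ioo : ∀ n, tn n ∈ Ioo a b := fun n =>
        ⟨hs.1.trans (htn_mem n).1, (htn_mem n).2⟩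
      have htg := hseq_tend s hs g hgIcc
      have htW := hseq_tend s hs W hWIcc
      have htψ := hseq_tend s hs ψ hψIcc
      have hGeq : ∀ n, G (tn n) = G s - ∫ x in Ioc s (tn n), g x := by
        intro n
        have := hsplit g hgIcc s (tn n) hs.1.le (htn_mem n).1.le (htn_mem n).2
        rw [hG_def]; simp only; linarith
      have hGtend : Tendsto (fun n => G (tn n)) atTop (𝓝 0) := by
        have h1 : (fun n => G (tn n)) = fun n => G s - ∫ x in Ioc s (tn n), g x := by
          funext n; exact hGeq n
        rw [h1]
        have h2 := tendsto_const_nhds (x := G s) (f := atTop (α := ℕ)) |>.sub htg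
        have h0 : G s - (∫ x in Ioo s b, g x) = 0 := sub_eq_zero.mpr rfl
        rwa [h0] at h2
      have hbound : ∀ n, V s ≤ (ω₀^(1-θ) + (1-θ) * ω₀^(-θ) * G (tn n)) +
          (1+ε)^θ * ((1-θ) * ∫ x in Ioc s (tn n), W x) +
          ε * ((1-θ) * U^(1-θ) * ∫ x in Ioc s (tn n), ψ x) := by
        intro n
        have hto := htn_Ioo n
        have hue : u s ≤ (1+ε) * u (tn n) := by
          have h1 := husplit s (tn n) hs (htn_mem n).1.le (htn_mem n).2
          have h2 : (∫ x in Ioc s (tn n), g x) ≤ G s := by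
            have := hGeq n; linarith [hG0 (tn n) hto]
          have h3 : ε * ω₀ ≤ ε * u (tn n) :=
            mul_le_mul_of_nonneg_left (hul (tn n) hto) hε.le
          linarith
        have h4 := hstep s (tn n) hs hto (htn_mem n).1.le hue
        have hΨ0 : 0 ≤ ∫ x in Ioc s (tn n), ψ x :=
          setIntegral_nonneg measurableSet_Ioc fun x hx =>
            hψ0 x ⟨hs.1.trans hx.1, hx.2.trans_lt (htn_mem n).2⟩
        have h5 : (u (tn n))^(1-θ) ≤ U^(1-θ) :=
          Real.rpow_le_rpow (hupos (tn n) hto).le (huU (tn n) hto) hp.le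
        have h6 : V (tn n) ≤ ω₀^(1-θ) + (1-θ) * ω₀^(-θ) * G (tn n) := by
          have h7 : V (tn n) ≤ (u (tn n))^(1-θ) := by
            rw [hV_app]
            exact mul_le_of_le_one_right (Real.rpow_pos_of_pos (hupos _ hto) _).le
              (hE1 _ hto)
          have h8 := tangent_rpow hω₀ (hul (tn n) hto) hp.le (by linarith)
          have hexp : (1-θ) - 1 = -θ := by ring
          rw [hexp] at h8
          have h9 : u (tn n) - ω₀ = G (tn n) := by rw [hu_app]; ring
          rw [h9] at h8
          linarith
        have h10 : ε * ((1-θ) * (u (tn n))^(1-θ) * ∫ x in Ioc s (tn n), ψ x) ≤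
            ε * ((1-θ) * U^(1-θ) * ∫ x in Ioc s (tn n), ψ x) := by
          have := mul_le_mul_of_nonneg_right h5 hΨ0
          have h12 := mul_le_mul_of_nonneg_left this (show (0:ℝ) ≤ ε*(1-θ) by positivity)
          linarith [h12]
        linarith
      have hlim : Tendsto (fun n => (ω₀^(1-θ) + (1-θ) * ω₀^(-θ) * G (tn n)) +
          (1+ε)^θ * ((1-θ) * ∫ x in Ioc s (tn n), W x) +
          ε * ((1-θ) * U^(1-θ) * ∫ x in Ioc s (tn n), ψ x)) atTop
          (𝓝 ((ω₀^(1-θ) + (1-θ) * ω₀^(-θ) * 0) +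
            (1+ε)^θ * ((1-θ) * Iφ s) + ε * ((1-θ) * U^(1-θ) * P s))) := by
        refine Tendsto.add (Tendsto.add ?_ ?_) ?_
        · exact tendsto_const_nhds.add (tendsto_const_nhds.mul hGtend)
        · exact tendsto_const_nhds.mul (tendsto_const_nhds.mul htW)
        · exact tendsto_const_nhds.mul (tendsto_const_nhds.mul htψ)
      have := ge_of_tendsto' hlim hbound
      linarith
    -- main induction
    have main : ∀ n : ℕ, ∀ s ∈ Ioo a b, G s ≤ n * (ε * ω₀) →
        V s ≤ ω₀^(1-θ) + (1+ε)^θ * ((1-θ) * Iφ s) + ε * ((1-θ) * U^(1-θ) * P s) := by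
      intro n
      induction n with
      | zero =>
        intro s hs hGs
        refine hnear s hs ?_
        simp only [Nat.cast_zero, zero_mul] at hGs
        nlinarith [hG0 s hs, hε, hω₀]
      | succ n ih =>
        intro s hs hGs
        by_cases hc : G s ≤ ε * ω₀
        · exact hnear s hs hc
        push_neg at hc
        -- find t with G t = G s - ε ω₀ by IVT
        set tn : ℕ → ℝ := fun n => b - (b - s)/(n+2) with htn_def
        have htn_mem : ∀ n, tn n ∈ Ioo s b := hseq_mem s hs
        have htg := hseq_tend s hs g hgIcc
        have hGeq : ∀ m, G (tn m) = G s - ∫ x in Ioc s (tn m), g x := by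
          intro m
          have := hsplit g hgIcc s (tn m) hs.1.le (htn_mem m).1.le (htn_mem m).2
          rw [hG_def]; simp only; linarith
        have hGtend : Tendsto (fun m => G (tn m)) atTop (𝓝 0) := by
          have h1 : (fun m => G (tn m)) = fun m => G s - ∫ x in Ioc s (tn m), g x := by
            funext m; exact hGeq m
          rw [h1]
          have h2 := tendsto_const_nhds (x := G s) (f := atTop (α := ℕ)) |>.sub htg
          have h0 : G s - (∫ x in Ioo s b, g x) = 0 := sub_eq_zero.mpr rfl
          rwa [h0] at h2
        obtain ⟨m, hm⟩ := (hGtend.eventually_lt_const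
          (show (0:ℝ) < G s - ε * ω₀ by linarith)).exists
        set t₀ : ℝ := tn m with ht₀_def
        have ht₀ : t₀ ∈ Ioo s b := htn_mem m
        have hGcont : ContinuousOn G (Icc s t₀) := by
          have hsubIcc : Icc s t₀ ⊆ Icc a b := fun x hx =>
            ⟨hs.1.le.trans hx.1, hx.2.trans ht₀.2.le⟩
          have hprim : ContinuousOn (fun x => ∫ τ in Ioc s x, g τ) (Icc s t₀) :=
            intervalIntegral.continuousOn_primitive (hgIcc.mono_set hsubIcc)
          have hGeq2 : ∀ x ∈ Icc s t₀, G x = G s - ∫ τ in Ioc s x, g τ := by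
            intro x hx
            have hxb : x < b := lt_of_le_of_lt hx.2 ht₀.2
            have := hsplit g hgIcc s x hs.1.le hx.1 hxb
            rw [hG_def]; simp only; linarith
          exact ContinuousOn.congr ((continuousOn_const (c := G s)).sub hprim) hGeq2
        have hIVT := intermediate_value_Icc' ht₀.1.le hGcont
        have hval : G s - ε * ω₀ ∈ Icc (G t₀) (G s) := ⟨hm.le, by nlinarith⟩
        obtain ⟨t, htmem, hGt⟩ := hIVT hval
        have htIoo : t ∈ Ioo a b :=
          ⟨hs.1.trans_le htmem.1, lt_of_le_of_lt htmem.2 ht₀.2⟩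
        have hGtle : G t ≤ n * (ε * ω₀) := by
          have : G s ≤ (n + 1 : ℕ) * (ε * ω₀) := hGs
          push_cast at this ⊢
          linarith [hGt]
        have hih := ih t htIoo hGtle
        have hue : u s ≤ (1+ε) * u t := by
          rw [hu_app, hu_app]
          have h1 : ω₀ ≤ u t := hul t htIoo
          rw [hu_app] at h1
          nlinarith [hGt, hG0 t htIoo, hε]
        have h2 := hstep s t hs htIoo htmem.1 hue
        have hΨ0 : 0 ≤ ∫ x in Ioc s t, ψ x :=
          setIntegral_nonneg measurableSet_Ioc fun x hx =>
            hψ0 x ⟨hs.1.trans hx.1, hx.2.trans_lt htIoo.2⟩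
        have h5 : (u t)^(1-θ) ≤ U^(1-θ) :=
          Real.rpow_le_rpow (hupos t htIoo).le (huU t htIoo) hp.le
        have h10 : ε * ((1-θ) * (u t)^(1-θ) * ∫ x in Ioc s t, ψ x) ≤
            ε * ((1-θ) * U^(1-θ) * ∫ x in Ioc s t, ψ x) := by
          have := mul_le_mul_of_nonneg_right h5 hΨ0
          have h12 := mul_le_mul_of_nonneg_left this (show (0:ℝ) ≤ ε*(1-θ) by positivity)
          linarith [h12]
        have hIφsplit : Iφ s = (∫ x in Ioc s t, W x) + Iφ t := by
          have := hsplit W hWIcc s t hs.1.le htmem.1 htIoo.2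
          rw [hIφ_def]; simp only; linarith
        have hPsp : P s = (∫ x in Ioc s t, ψ x) + P t := hPsplit s t hs.1 htmem.1 htIoo.2
        have hc1 : (0:ℝ) ≤ (1+ε)^θ := (Real.rpow_pos_of_pos (by linarith) _).le
        rw [hIφsplit, hPsp]
        linarith [h2, hih, h10]
    -- conclude the key estimate
    obtain ⟨n, hn⟩ := exists_nat_ge (G l / (ε * ω₀))
    have hGl : G l ≤ n * (ε * ω₀) := by
      rw [div_le_iff₀ (by positivity)] at hn
      linarith
    have hVl := main n l hl hGl
    set Bv : ℝ := ω₀^(1-θ) + (1+ε)^θ * ((1-θ) * Iφ l) + ε * ((1-θ) * U^(1-θ) * P l)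
      with hBv_def
    have hBv0 : 0 ≤ Bv := by
      rw [hBv_def]
      have h1 : (0:ℝ) ≤ ω₀^(1-θ) := (Real.rpow_pos_of_pos hω₀ _).le
      have h2 : (0:ℝ) ≤ (1+ε)^θ := (Real.rpow_pos_of_pos (by linarith) _).le
      have h3 : (0:ℝ) ≤ U^(1-θ) := (Real.rpow_pos_of_pos hU0 _).le
      have h4 := hIφ0 l hl
      have h5 := hP0 l hl
      positivity
    have hEl : E l * Real.exp ((1-θ) * P l) = 1 := by
      rw [hE_def]; simp only
      rw [← Real.exp_add]
      have : (θ-1) * P l + (1-θ) * P l = 0 := by ring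
      rw [this, Real.exp_zero]
    have hup2 : (u l)^(1-θ) ≤ Bv * Real.exp ((1-θ) * P l) := by
      have h1 : (u l)^(1-θ) * E l ≤ Bv := hVl
      calc (u l)^(1-θ) = ((u l)^(1-θ) * E l) * Real.exp ((1-θ) * P l) := by
            rw [mul_assoc, hEl, mul_one]
        _ ≤ Bv * Real.exp ((1-θ) * P l) :=
            mul_le_mul_of_nonneg_right h1 (Real.exp_pos _).le
    have hul1 : u l = ((u l)^(1-θ))^(1/(1-θ)) := by
      rw [← Real.rpow_mul (hupos l hl).le, mul_one_div_cancel hp.ne', Real.rpow_one]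
    have hfinal : f l ≤ Bv^(1/(1-θ)) * Real.exp (P l) := by
      have h1 : f l ≤ u l := hfu l hl
      have h2 : ((u l)^(1-θ))^(1/(1-θ)) ≤ (Bv * Real.exp ((1-θ) * P l))^(1/(1-θ)) :=
        Real.rpow_le_rpow (Real.rpow_pos_of_pos (hupos l hl) _).le hup2 (by positivity)
      have h3 : (Bv * Real.exp ((1-θ) * P l))^(1/(1-θ)) =
          Bv^(1/(1-θ)) * Real.exp (P l) := by
        rw [Real.mul_rpow hBv0 (Real.exp_pos _).le, ← Real.exp_mul]
        congr 1
        field_simp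
      rw [← h3]
      calc f l ≤ u l := h1
        _ = ((u l)^(1-θ))^(1/(1-θ)) := hul1
        _ ≤ _ := h2
    exact hfinal
  -- pass to the limit ε → 0
  have h0 : Tendsto (fun n : ℕ => 1/((n:ℝ)+1)) atTop (𝓝 0) :=
    tendsto_one_div_add_atTop_nhds_zero_nat
  have key2 : ∀ ω₀ : ℝ, 0 < ω₀ → ω ≤ ω₀ →
      f l ≤ (ω₀^(1-θ) + (1-θ) * Iφ l)^(1/(1-θ)) * Real.exp (P l) := by
    intro ω₀ hω₀ hωle
    have hbnd : ∀ n : ℕ, f l ≤ (ω₀^(1-θ) + (1+1/((n:ℝ)+1))^θ * ((1-θ) * Iφ l) +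
        (1/((n:ℝ)+1)) * ((1-θ) * (ω₀ + G a)^(1-θ) * P l))^(1/(1-θ)) * Real.exp (P l) :=
      fun n => key ω₀ hω₀ hωle (1/((n:ℝ)+1)) (by positivity)
    have h1 : Tendsto (fun n : ℕ => (1+1/((n:ℝ)+1))^θ) atTop (𝓝 1) := by
      have h2 := (tendsto_const_nhds (x := (1:ℝ)) (f := atTop (α := ℕ))).add h0
      have h3 := h2.rpow_const (p := θ) (Or.inl (by norm_num))
      simpa using h3
    have h2 : Tendsto (fun n : ℕ => ω₀^(1-θ) + (1+1/((n:ℝ)+1))^θ * ((1-θ) * Iφ l) +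
        (1/((n:ℝ)+1)) * ((1-θ) * (ω₀ + G a)^(1-θ) * P l)) atTop
        (𝓝 (ω₀^(1-θ) + (1-θ) * Iφ l)) := by
      have h4 := (tendsto_const_nhds (x := ω₀^(1-θ)) (f := atTop (α := ℕ))).add
        (h1.mul_const ((1-θ) * Iφ l)) |>.add (h0.mul_const ((1-θ) * (ω₀ + G a)^(1-θ) * P l))
      simpa using h4
    have h3 : Tendsto (fun n : ℕ => (ω₀^(1-θ) + (1+1/((n:ℝ)+1))^θ * ((1-θ) * Iφ l) +
        (1/((n:ℝ)+1)) * ((1-θ) * (ω₀ + G a)^(1-θ) * P l))^(1/(1-θ)) * Real.exp (P l)) atTop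
        (𝓝 ((ω₀^(1-θ) + (1-θ) * Iφ l)^(1/(1-θ)) * Real.exp (P l))) :=
      (h2.rpow_const (Or.inr (by positivity))).mul_const _
    exact ge_of_tendsto' h3 hbnd
  -- pass to the limit ω₀ → ω
  have hfin : ∀ n : ℕ, f l ≤ ((ω + 1/((n:ℝ)+1))^(1-θ) + (1-θ) * Iφ l)^(1/(1-θ)) *
      Real.exp (P l) :=
    fun n => key2 (ω + 1/((n:ℝ)+1)) (by positivity) (le_add_of_nonneg_right (by positivity))
  have h4 : Tendsto (fun n : ℕ => ((ω + 1/((n:ℝ)+1))^(1-θ) + (1-θ) * Iφ l)^(1/(1-θ)) *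
      Real.exp (P l)) atTop (𝓝 ((ω^(1-θ) + (1-θ) * Iφ l)^(1/(1-θ)) * Real.exp (P l))) := by
    have hb : Tendsto (fun n : ℕ => (ω + 1/((n:ℝ)+1))^(1-θ)) atTop (𝓝 (ω^(1-θ))) := by
      have h5 := (tendsto_const_nhds (x := ω) (f := atTop (α := ℕ))).add h0
      have h6 := h5.rpow_const (p := 1-θ) (Or.inr hp.le)
      simpa using h6
    exact ((hb.add tendsto_const_nhds).rpow_const (Or.inr (by positivity))).mul_const _
  have hlast := ge_of_tendsto' h4 hfin
  exact hlast
end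

section
/- Let B and C be bounded operators on H which belong to the class C(A) (i.e. B, C ∈ C^1(A) and the approximation classes A_2(A,B) and A_2(A,C) are non-empty). Then for any λ ∈ ℂ, the operators BC, B + λC and B* also belong to C(A). -/
open Set MeasureTheory

variable {H : Type} [NormedAddCommGroup H] [InnerProductSpace ℂ H] [CompleteSpace H]

/-- `C` is the bounded operator representing the commutator form
`F(φ,ψ) = ⟨Aφ, Bψ⟩ − ⟨φ, BAψ⟩` on `D(A) × D(A)`; its existence means `B ∈ C¹(A)`
and then `C = ad_A(B) = [A,B]`. -/
def IsCommutatorOf (A : H →ₗ.[ℂ] H) (B C : H →L[ℂ] H) : Prop :=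
  ∀ x y : A.domain,
    (inner ℂ (A x) (B (y : H)) : ℂ) - inner ℂ (x : H) (B (A y)) = inner ℂ (x : H) (C (y : H))

/-- The family `(B_ε)_{ε∈(0,ε₀]}` belongs to the class `A₀(B)`: `‖B_ε − B‖ ≤ cε`,
`ε ↦ B_ε` is norm-`C¹` on `(0,ε₀]`, and `ε ↦ ε⁻¹‖∂_ε B_ε‖` is integrable. -/
def MemA0 (B : H →L[ℂ] H) (ε₀ : ℝ) (Bf : ℝ → H →L[ℂ] H) : Prop :=
  0 < ε₀ ∧
  (∃ c : ℝ, 0 < c ∧ ∀ ε ∈ Ioc (0:ℝ) ε₀, ‖Bf ε - B‖ ≤ c * ε) ∧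
  ∃ Bd : ℝ → H →L[ℂ] H,
    (∀ ε ∈ Ioc (0:ℝ) ε₀, HasDerivWithinAt Bf (Bd ε) (Ioc (0:ℝ) ε₀) ε) ∧
    ContinuousOn Bd (Ioc (0:ℝ) ε₀) ∧
    IntegrableOn (fun ε => ε⁻¹ * ‖Bd ε‖) (Ioc (0:ℝ) ε₀)

/-- The family `(B_ε)` together with the commutator family `adBf ε = [A, B_ε]`
satisfies the conditions of the class `A₁(A,B)` (where `adB = [A,B]`): it is in
`A₀(B)`, each `B_ε ∈ C¹(A)`, `‖[A,B_ε] − [A,B]‖ → 0` as `ε → 0`, `ε ↦ [A,B_ε]` is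
norm-`C¹` on `(0,ε₀]`, and `ε ↦ ‖∂_ε[A,B_ε]‖` is integrable. -/
def MemA1With (A : H →ₗ.[ℂ] H) (B adB : H →L[ℂ] H) (ε₀ : ℝ)
    (Bf adBf : ℝ → H →L[ℂ] H) : Prop :=
  MemA0 B ε₀ Bf ∧
  (∀ ε ∈ Ioc (0:ℝ) ε₀, IsCommutatorOf A (Bf ε) (adBf ε)) ∧
  Filter.Tendsto (fun ε => ‖adBf ε - adB‖) (nhdsWithin 0 (Ioc (0:ℝ) ε₀)) (nhds 0) ∧
  ∃ Cd : ℝ → H →L[ℂ] H,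
    (∀ ε ∈ Ioc (0:ℝ) ε₀, HasDerivWithinAt adBf (Cd ε) (Ioc (0:ℝ) ε₀) ε) ∧
    ContinuousOn Cd (Ioc (0:ℝ) ε₀) ∧
    IntegrableOn (fun ε => ‖Cd ε‖) (Ioc (0:ℝ) ε₀)

/-- The family `(B_ε)_{ε∈(0,ε₀]}` belongs to the class `A₁(A,B)`. -/
def MemA1 (A : H →ₗ.[ℂ] H) (B adB : H →L[ℂ] H) (ε₀ : ℝ)
    (Bf : ℝ → H →L[ℂ] H) : Prop :=
  ∃ adBf, MemA1With A B adB ε₀ Bf adBf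

/-- The family `(B_ε)_{ε∈(0,ε₀]}` belongs to the class `A₂(A,B)`: it is in `A₁(A,B)`
and moreover each `B_ε ∈ C²(A)` with `ε ↦ ‖ad_A² B_ε‖` integrable. -/
def MemA2 (A : H →ₗ.[ℂ] H) (B adB : H →L[ℂ] H) (ε₀ : ℝ)
    (Bf : ℝ → H →L[ℂ] H) : Prop :=
  ∃ adBf ad2Bf : ℝ → H →L[ℂ] H,
    MemA1With A B adB ε₀ Bf adBf ∧
    (∀ ε ∈ Ioc (0:ℝ) ε₀, IsCommutatorOf A (adBf ε) (ad2Bf ε)) ∧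
    IntegrableOn (fun ε => ‖ad2Bf ε‖) (Ioc (0:ℝ) ε₀)

/-- `B` belongs to the class `C(A)`: `B ∈ C¹(A)` and `A₂(A,B) ≠ ∅`. -/
def MemCclass (A : H →ₗ.[ℂ] H) (B : H →L[ℂ] H) : Prop :=
  ∃ adB : H →L[ℂ] H, IsCommutatorOf A B adB ∧
    ∃ (ε₀ : ℝ) (Bf : ℝ → H →L[ℂ] H), MemA2 A B adB ε₀ Bf


section Aux

local notation "⟪" x ", " y "⟫" => (inner ℂ x y : ℂ)

variable {A : H →ₗ.[ℂ] H} {B C adB adC : H →L[ℂ] H}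

lemma aSymm (hA : IsSelfAdjoint A) (x y : A.domain) :
    ⟪(A x : H), (y : H)⟫ = ⟪(x : H), (A y : H)⟫ := by
  have h : A.IsFormalAdjoint A := by
    have h0 : (A.adjoint).IsFormalAdjoint A := LinearPMap.adjoint_isFormalAdjoint hA.dense_domain
    rwa [LinearPMap.isSelfAdjoint_def.mp hA] at h0
  exact h x y

lemma mapsTo_of (hA : IsSelfAdjoint A) (h : IsCommutatorOf A B adB) (y : A.domain) :
    ∃ hy : B y ∈ A.domain, A ⟨B y, hy⟩ = B (A y) + adB y := by
  have hD := hA.dense_domain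
  have key : ∀ x : A.domain, ⟪B (A y) + adB (y : H), (x : H)⟫ = ⟪B (y : H), (A x : H)⟫ := by
    intro x
    have := h x y
    have hconj := congrArg (starRingEnd ℂ) this
    simp only [map_sub, inner_conj_symm] at hconj
    rw [inner_add_left]
    linear_combination -hconj
  have hmem' : B (y : H) ∈ (A.adjoint).domain :=
    LinearPMap.mem_adjoint_domain_of_exists _ ⟨B (A y) + adB (y : H), key⟩
  have hy : B (y : H) ∈ A.domain := by
    rwa [LinearPMap.isSelfAdjoint_def.mp hA] at hmem'
  refine ⟨hy, ?_⟩
  refine hD.eq_of_inner_left (𝕜 := ℂ) fun v' hv' => ?_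
  obtain ⟨v, rfl⟩ : ∃ v : A.domain, (v : H) = v' := ⟨⟨v', hv'⟩, rfl⟩
  calc ⟪(A ⟨B y, hy⟩ : H), (v : H)⟫ = ⟪(B (y:H) : H), (A v : H)⟫ := aSymm hA ⟨B y, hy⟩ v
  _ = ⟪B (A y) + adB (y : H), (v : H)⟫ := (key v).symm

lemma icAdd (hB : IsCommutatorOf A B adB) (hC : IsCommutatorOf A C adC) :
    IsCommutatorOf A (B + C) (adB + adC) := by
  intro x y
  have h1 := hB x y; have h2 := hC x y
  simp only [ContinuousLinearMap.add_apply, inner_add_right]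
  linear_combination h1 + h2

lemma icSmul (l : ℂ) (hC : IsCommutatorOf A C adC) : IsCommutatorOf A (l • C) (l • adC) := by
  intro x y
  have h2 := hC x y
  simp only [ContinuousLinearMap.smul_apply, inner_smul_right]
  linear_combination l * h2

lemma icNeg (hC : IsCommutatorOf A C adC) : IsCommutatorOf A (-C) (-adC) := by
  intro x y
  have h2 := hC x y
  simp only [ContinuousLinearMap.neg_apply, inner_neg_right]
  linear_combination -h2

lemma icStar (hB : IsCommutatorOf A B adB) : IsCommutatorOf A (star B) (-(star adB)) := by
  intro x y
  have h := hB y x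
  have hconj := congrArg (starRingEnd ℂ) h
  simp only [map_sub, inner_conj_symm] at hconj
  simp only [ContinuousLinearMap.star_eq_adjoint, ContinuousLinearMap.neg_apply,
    inner_neg_right, ContinuousLinearMap.adjoint_inner_right]
  linear_combination -hconj

lemma icMul (hA : IsSelfAdjoint A) (hB : IsCommutatorOf A B adB) (hC : IsCommutatorOf A C adC) :
    IsCommutatorOf A (B * C) (adB * C + B * adC) := by
  intro x y
  obtain ⟨hy, hAy⟩ := mapsTo_of hA hC y
  have h1 := hB x ⟨C y, hy⟩
  have hz : (A ⟨C (y:H), hy⟩ : H) = C (A y) + adC (y : H) := hAy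
  rw [hz] at h1
  simp only [ContinuousLinearMap.mul_apply, ContinuousLinearMap.add_apply, inner_add_right,
    map_add] at *
  linear_combination h1

lemma normWitness (hD : Dense (A.domain : Set H)) (T : H →L[ℂ] H)
    {c : ℝ} (hc : c < ‖T‖) :
    ∃ x y : A.domain, ‖(x:H)‖ ≤ 1 ∧ ‖(y:H)‖ ≤ 1 ∧ c < ‖⟪(x:H), T (y:H)⟫‖ := by
  rcases lt_or_ge c 0 with h0 | h0
  · refine ⟨0, 0, by simp, by simp, ?_⟩
    simpa using h0
  obtain ⟨y0, hy0n, hy0⟩ := T.exists_lt_apply_of_lt_opNorm hc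
  set m := ‖T y0‖ - c with hm
  have hmpos : 0 < m := by simp only [hm]; linarith
  have hTpos : (0:ℝ) < ‖T‖ + 1 := by positivity
  set δy := min (1 - ‖y0‖) (m / (2 * (‖T‖ + 1))) with hδy
  have hδypos : 0 < δy := lt_min (by linarith) (by positivity)
  obtain ⟨y', hy'ball, hy'mem⟩ := Metric.dense_iff.mp hD y0 δy hδypos
  rw [Metric.mem_ball, dist_eq_norm] at hy'ball
  have hy'1 : ‖y'‖ ≤ 1 := by
    have : ‖y'‖ ≤ ‖y0‖ + ‖y' - y0‖ := by
      have h' : y0 + (y' - y0) = y' := by abel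
      calc ‖y'‖ = ‖y0 + (y' - y0)‖ := by rw [h']
      _ ≤ ‖y0‖ + ‖y' - y0‖ := norm_add_le _ _
    have hδ1 : δy ≤ 1 - ‖y0‖ := min_le_left _ _
    linarith
  set N := ‖T y'‖ with hN
  have hTnn : (0:ℝ) ≤ ‖T‖ := norm_nonneg T
  have hNlow : c + m/2 ≤ N := by
    have h1 : ‖T y0‖ - ‖T y'‖ ≤ ‖T y0 - T y'‖ := norm_sub_norm_le _ _
    have h2 : ‖T y0 - T y'‖ ≤ ‖T‖ * ‖y0 - y'‖ := by
      rw [← map_sub]; exact T.le_opNorm _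
    have h3 : ‖y0 - y'‖ ≤ δy := by rw [norm_sub_rev]; linarith
    have h4 : ‖T‖ * ‖y0 - y'‖ ≤ ‖T‖ * δy := by
      exact mul_le_mul_of_nonneg_left h3 hTnn
    have h5 : δy ≤ m / (2 * (‖T‖ + 1)) := min_le_right _ _
    have h6 : ‖T‖ * δy ≤ m / 2 := by
      calc ‖T‖ * δy ≤ ‖T‖ * (m / (2 * (‖T‖ + 1))) := mul_le_mul_of_nonneg_left h5 hTnn
      _ ≤ (‖T‖ + 1) * (m / (2 * (‖T‖ + 1))) := by
          apply mul_le_mul_of_nonneg_right (by linarith) (by positivity)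
      _ = m / 2 := by field_simp
    have : ‖T y0‖ = c + m := by rw [hm]; ring
    linarith
  have hcN : c < N := by linarith
  have hN0 : 0 < N := lt_of_le_of_lt h0 hcN
  set t := (N - c) / (2 * N) with ht
  have htpos : 0 < t := div_pos (by linarith) (by positivity)
  have hthalf : t ≤ 1/2 := by
    rw [ht, div_le_div_iff₀ (by positivity) (by norm_num)]
    nlinarith
  set v : H := (((1 - t)/N : ℝ) : ℂ) • T y' with hv
  have ht1 : (0:ℝ) ≤ 1 - t := by linarith
  have hcoef : (0:ℝ) ≤ (1 - t)/N := div_nonneg ht1 hN0.le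
  have hinnerv : ‖⟪v, T y'⟫‖ = (1 - t) * N := by
    rw [hv, inner_smul_left, Complex.conj_ofReal, inner_self_eq_norm_sq_to_K, ← hN]
    rw [norm_mul, Complex.norm_real, Real.norm_of_nonneg hcoef, norm_pow, RCLike.norm_ofReal,
      abs_of_nonneg hN0.le]
    field_simp
  have hvnorm : ‖v‖ = 1 - t := by
    rw [hv, norm_smul, Complex.norm_real, Real.norm_of_nonneg hcoef, ← hN]
    field_simp
  set δx := min t ((N - c) / (2 * (N + 1))) with hδx
  have hδxpos : 0 < δx := lt_min htpos (div_pos (by linarith) (by positivity))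
  obtain ⟨x', hx'ball, hx'mem⟩ := Metric.dense_iff.mp hD v δx hδxpos
  rw [Metric.mem_ball, dist_eq_norm] at hx'ball
  refine ⟨⟨x', hx'mem⟩, ⟨y', hy'mem⟩, ?_, hy'1, ?_⟩
  · have : ‖x'‖ ≤ ‖v‖ + ‖x' - v‖ := by
      have h' : v + (x' - v) = x' := by abel
      calc ‖x'‖ = ‖v + (x' - v)‖ := by rw [h']
      _ ≤ ‖v‖ + ‖x' - v‖ := norm_add_le _ _
    have hδt : δx ≤ t := min_le_left _ _
    simp only [hvnorm] at this
    simp only []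
    linarith
  · simp only []
    have hsub : ‖⟪v, T y'⟫‖ - ‖⟪x', T y'⟫‖ ≤ ‖⟪v - x', T y'⟫‖ := by
      calc ‖⟪v, T y'⟫‖ - ‖⟪x', T y'⟫‖ ≤ ‖⟪v, T y'⟫ - ⟪x', T y'⟫‖ := norm_sub_norm_le _ _
      _ = ‖⟪v - x', T y'⟫‖ := by rw [← inner_sub_left]
    have hbd : ‖⟪v - x', T y'⟫‖ ≤ ‖v - x'‖ * N := by
      rw [hN]; exact norm_inner_le_norm _ _
    have h7 : ‖v - x'‖ < (N - c) / (2 * (N + 1)) := by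
      rw [norm_sub_rev]; exact lt_of_lt_of_le hx'ball (min_le_right _ _)
    have h8 : ‖v - x'‖ * N < (N - c) / 2 := by
      have : (N - c) / (2 * (N + 1)) * N < (N - c) / 2 := by
        rw [div_mul_eq_mul_div, div_lt_div_iff₀ (by positivity) (by norm_num)]
        nlinarith
      nlinarith [norm_nonneg (v - x'), h7]
    have h9 : (1 - t) * N = (N + c) / 2 := by
      rw [ht]; field_simp; ring
    linarith [hinnerv ▸ hsub]


lemma normMeas (hA : IsSelfAdjoint A) {ε₀ : ℝ} {adP G : ℝ → H →L[ℂ] H}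
    (hcont : ContinuousOn adP (Ioc (0:ℝ) ε₀))
    (hcomm : ∀ ε ∈ Ioc (0:ℝ) ε₀, IsCommutatorOf A (adP ε) (G ε)) :
    AEStronglyMeasurable (fun ε => ‖G ε‖) (volume.restrict (Ioc (0:ℝ) ε₀)) := by
  have hD := hA.dense_domain
  rw [aestronglyMeasurable_iff_aemeasurable]
  apply aemeasurable_restrict_of_measurable_subtype measurableSet_Ioc
  have hlsc : LowerSemicontinuous (fun ε : Ioc (0:ℝ) ε₀ => ‖G ε‖) := by
    intro ε₁ c hc
    obtain ⟨x, y, hx1, hy1, hxy⟩ := normWitness hD (G ε₁) hc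
    set g : Ioc (0:ℝ) ε₀ → ℝ := fun ε => ‖⟪(A x : H), adP ε (y : H)⟫ - ⟪(x : H), adP ε (A y : H)⟫‖
      with hg
    have hgval : ∀ ε : Ioc (0:ℝ) ε₀, g ε = ‖⟪(x:H), G ε (y:H)⟫‖ := fun ε => by
      rw [hg]; exact congrArg norm (hcomm ε ε.2 x y)
    have hgcont : Continuous g := by
      have h1 : Continuous (fun ε : Ioc (0:ℝ) ε₀ => adP ε) := hcont.restrict
      rw [hg]
      exact ((continuous_const.inner (h1.clm_apply continuous_const)).sub
        (continuous_const.inner (h1.clm_apply continuous_const))).norm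
    have hgle : ∀ ε : Ioc (0:ℝ) ε₀, g ε ≤ ‖G ε‖ := fun ε => by
      rw [hgval]
      calc ‖⟪(x:H), G ε (y:H)⟫‖ ≤ ‖(x:H)‖ * ‖G ε (y:H)‖ := norm_inner_le_norm _ _
      _ ≤ 1 * (‖G ε‖ * ‖(y:H)‖) :=
          mul_le_mul hx1 ((G ε).le_opNorm _) (norm_nonneg _) zero_le_one
      _ ≤ 1 * (‖G ε‖ * 1) := by
          have := mul_le_mul_of_nonneg_left hy1 (norm_nonneg (G ε)); nlinarith [norm_nonneg (G (ε:ℝ))]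
      _ = ‖G ε‖ := by ring
    have hgε₁ : c < g ε₁ := by rw [hgval]; exact hxy
    have hev : ∀ᶠ ε in nhds ε₁, c < g ε :=
      (hgcont.continuousAt).eventually (eventually_gt_nhds hgε₁)
    exact hev.mono fun ε h => lt_of_lt_of_le h (hgle ε)
  exact hlsc.measurable


lemma bddOfTendsto {X : Type*} [NormedAddCommGroup X] {ε₀ : ℝ} {f : ℝ → X} {L : X}
    (hcont : ContinuousOn f (Ioc (0:ℝ) ε₀))
    (ht : Filter.Tendsto (fun ε => ‖f ε - L‖) (nhdsWithin 0 (Ioc (0:ℝ) ε₀)) (nhds 0)) :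
    ∃ M : ℝ, 0 ≤ M ∧ ∀ ε ∈ Ioc (0:ℝ) ε₀, ‖f ε‖ ≤ M := by
  have h1 : ∀ᶠ ε in nhdsWithin 0 (Ioc (0:ℝ) ε₀), ‖f ε - L‖ < 1 :=
    ht.eventually (eventually_lt_nhds (by norm_num : (0:ℝ) < 1))
  rw [Filter.eventually_iff, Metric.mem_nhdsWithin_iff] at h1
  obtain ⟨δ, hδpos, hδ'⟩ := h1
  have hδ : ∀ ε ∈ Ioc (0:ℝ) ε₀, dist ε 0 < δ → ‖f ε - L‖ < 1 := fun ε hε hd =>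
    hδ' ⟨Metric.mem_ball.mpr hd, hε⟩
  rcases le_or_gt ε₀ 0 with h | hε₀pos
  · exact ⟨0, le_refl 0, fun ε hε => absurd (hε.1.trans_le hε.2) (not_lt.mpr h)⟩
  set a := min (δ/2) ε₀ with ha
  have hapos : 0 < a := lt_min (by linarith) hε₀pos
  have hsub : Icc a ε₀ ⊆ Ioc (0:ℝ) ε₀ := fun x hx => ⟨lt_of_lt_of_le hapos hx.1, hx.2⟩
  obtain ⟨M₂, hM₂⟩ := (isCompact_Icc (a := a) (b := ε₀)).exists_bound_of_continuousOn
    (hcont.mono hsub)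
  refine ⟨max (‖L‖ + 1) M₂, le_trans (by positivity) (le_max_left _ _), fun ε hε => ?_⟩
  rcases lt_or_ge ε a with h | h
  · have hd : dist ε 0 < δ := by
      rw [Real.dist_eq, sub_zero, abs_of_pos hε.1]
      have : a ≤ δ/2 := min_le_left _ _
      linarith
    have := hδ ε hε hd
    have h2 : ‖f ε‖ ≤ ‖L‖ + ‖f ε - L‖ := by
      have h' : L + (f ε - L) = f ε := by abel
      calc ‖f ε‖ = ‖L + (f ε - L)‖ := by rw [h']
      _ ≤ ‖L‖ + ‖f ε - L‖ := norm_add_le _ _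
    exact le_trans (by linarith) (le_max_left _ _)
  · exact le_trans (hM₂ ε ⟨h, hε.2⟩) (le_max_right _ _)


lemma normBddOfLin {X : Type*} [NormedAddCommGroup X] {ε₀ c : ℝ} {f : ℝ → X} {L : X}
    (hc : ∀ ε ∈ Ioc (0:ℝ) ε₀, ‖f ε - L‖ ≤ c * ε) :
    ∀ ε ∈ Ioc (0:ℝ) ε₀, ‖f ε‖ ≤ ‖L‖ + c * ε₀ := by
  intro ε hε
  have h2 : ‖f ε‖ ≤ ‖L‖ + ‖f ε - L‖ := by
    have h' : L + (f ε - L) = f ε := by abel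
    calc ‖f ε‖ = ‖L + (f ε - L)‖ := by rw [h']
    _ ≤ ‖L‖ + ‖f ε - L‖ := norm_add_le _ _
  have h3 := hc ε hε
  have hcnn : 0 ≤ c := by
    have := (norm_nonneg (f ε - L)).trans h3
    nlinarith [hε.1]
  nlinarith [hε.2, hε.1]


lemma tendstoOfLin {X : Type*} [NormedAddCommGroup X] {ε₀ c : ℝ} {f : ℝ → X} {L : X}
    (hc : ∀ ε ∈ Ioc (0:ℝ) ε₀, ‖f ε - L‖ ≤ c * ε) :
    Filter.Tendsto (fun ε => ‖f ε - L‖) (nhdsWithin 0 (Ioc (0:ℝ) ε₀)) (nhds 0) := by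
  apply squeeze_zero' (Filter.Eventually.of_forall (fun ε => norm_nonneg _))
  · exact Filter.eventually_iff_exists_mem.mpr ⟨Ioc (0:ℝ) ε₀, self_mem_nhdsWithin,
      fun ε hε => hc ε hε⟩
  · have h0 : Filter.Tendsto (fun ε : ℝ => c * ε) (nhds 0) (nhds (c * 0)) :=
      (continuous_const.mul continuous_id).tendsto 0
    have := h0.mono_left (nhdsWithin_le_nhds (s := Ioc (0:ℝ) ε₀))
    simpa using this


lemma intOnDom {ε₀ : ℝ} {f g : ℝ → ℝ} (hg : IntegrableOn g (Ioc (0:ℝ) ε₀))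
    (hf : AEStronglyMeasurable f (volume.restrict (Ioc (0:ℝ) ε₀)))
    (hb : ∀ ε ∈ Ioc (0:ℝ) ε₀, ‖f ε‖ ≤ g ε) : IntegrableOn f (Ioc (0:ℝ) ε₀) :=
  hg.mono' hf ((ae_restrict_iff' measurableSet_Ioc).mpr (Filter.Eventually.of_forall hb))

lemma contOnInv {ε₀ : ℝ} : ContinuousOn (fun ε : ℝ => ε⁻¹) (Ioc (0:ℝ) ε₀) :=
  continuousOn_id.inv₀ fun ε hε => ne_of_gt hε.1

lemma memA2shrink {ε₀ ε₁ : ℝ} {Bf : ℝ → H →L[ℂ] H} (h : MemA2 A B adB ε₀ Bf)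
    (h1 : 0 < ε₁) (h2 : ε₁ ≤ ε₀) : MemA2 A B adB ε₁ Bf := by
  obtain ⟨adBf, ad2Bf, ⟨⟨hpos, ⟨c, hcpos, hc⟩, Bd, hBd, hBdc, hBdi⟩, hcomm, htend,
    Bd1, hBd1, hBd1c, hBd1i⟩, h2comm, h2i⟩ := h
  have hsub : Ioc (0:ℝ) ε₁ ⊆ Ioc (0:ℝ) ε₀ := Ioc_subset_Ioc_right h2
  exact ⟨adBf, ad2Bf,
    ⟨⟨h1, ⟨c, hcpos, fun ε hε => hc ε (hsub hε)⟩, Bd,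
      fun ε hε => (hBd ε (hsub hε)).mono hsub, hBdc.mono hsub, hBdi.mono_set hsub⟩,
     fun ε hε => hcomm ε (hsub hε),
     htend.mono_left (nhdsWithin_mono 0 hsub),
     Bd1, fun ε hε => (hBd1 ε (hsub hε)).mono hsub, hBd1c.mono hsub, hBd1i.mono_set hsub⟩,
    fun ε hε => h2comm ε (hsub hε), h2i.mono_set hsub⟩

lemma memCclassAdd (hB : MemCclass A B) (hC : MemCclass A C) (hA : IsSelfAdjoint A) (l : ℂ) :
    MemCclass A (B + l • C) := by
  obtain ⟨adB, hadB, ε₀B, Bf, hBf⟩ := hB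
  obtain ⟨adC, hadC, ε₀C, Cf, hCf⟩ := hC
  have hposB : 0 < ε₀B := by obtain ⟨_, _, h, _, _⟩ := hBf; exact h.1.1
  have hposC : 0 < ε₀C := by obtain ⟨_, _, h, _, _⟩ := hCf; exact h.1.1
  set ε₀ := min ε₀B ε₀C with hε₀
  have hpos : 0 < ε₀ := lt_min hposB hposC
  replace hBf := memA2shrink hBf hpos (min_le_left _ _)
  replace hCf := memA2shrink hCf hpos (min_le_right _ _)
  obtain ⟨adBf, ad2Bf, ⟨⟨_, ⟨cB, hcBpos, hcB⟩, Bd, hBd, hBdc, hBdi⟩, hBcomm, hBtend,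
    Bd1, hBd1, hBd1c, hBd1i⟩, hB2comm, hB2i⟩ := hBf
  obtain ⟨adCf, ad2Cf, ⟨⟨_, ⟨cC, hcCpos, hcC⟩, Cd, hCd, hCdc, hCdi⟩, hCcomm, hCtend,
    Cd1, hCd1, hCd1c, hCd1i⟩, hC2comm, hC2i⟩ := hCf
  refine ⟨adB + l • adC, icAdd hadB (icSmul l hadC), ε₀, fun ε => Bf ε + l • Cf ε,
    fun ε => adBf ε + l • adCf ε, fun ε => ad2Bf ε + l • ad2Cf ε,
    ⟨⟨hpos, ⟨cB + ‖l‖ * cC + 1, by positivity, ?_⟩,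
      fun ε => Bd ε + l • Cd ε, ?_, ?_, ?_⟩, ?_, ?_,
      fun ε => Bd1 ε + l • Cd1 ε, ?_, ?_, ?_⟩, ?_, ?_⟩
  · intro ε hε
    have key : Bf ε + l • Cf ε - (B + l • C) = (Bf ε - B) + l • (Cf ε - C) := by
      rw [smul_sub]; abel
    calc ‖Bf ε + l • Cf ε - (B + l • C)‖ = ‖(Bf ε - B) + l • (Cf ε - C)‖ := by rw [key]
    _ ≤ ‖Bf ε - B‖ + ‖l‖ * ‖Cf ε - C‖ := by
        refine (norm_add_le _ _).trans ?_
        rw [norm_smul]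
    _ ≤ cB * ε + ‖l‖ * (cC * ε) := by
        have := hcB ε hε; have := hcC ε hε
        have hln : (0:ℝ) ≤ ‖l‖ := norm_nonneg l
        nlinarith
    _ ≤ (cB + ‖l‖ * cC + 1) * ε := by nlinarith [hε.1]
  · exact fun ε hε => (hBd ε hε).add ((hCd ε hε).const_smul l)
  · exact hBdc.add (hCdc.const_smul l)
  · refine intOnDom (hBdi.add (hCdi.const_mul ‖l‖)) ?_ ?_
    · refine ContinuousOn.aestronglyMeasurable ?_ measurableSet_Ioc
      exact (contOnInv.mul ((hBdc.add (hCdc.const_smul l)).norm))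
    · intro ε hε
      have h1 : ‖Bd ε + l • Cd ε‖ ≤ ‖Bd ε‖ + ‖l‖ * ‖Cd ε‖ := by
        refine (norm_add_le _ _).trans ?_; rw [norm_smul]
      have hεpos := hε.1
      have h2 : (0:ℝ) ≤ ε⁻¹ := inv_nonneg.mpr hεpos.le
      rw [Real.norm_of_nonneg (by positivity)]
      calc ε⁻¹ * ‖Bd ε + l • Cd ε‖ ≤ ε⁻¹ * (‖Bd ε‖ + ‖l‖ * ‖Cd ε‖) :=
            mul_le_mul_of_nonneg_left h1 h2
      _ = ε⁻¹ * ‖Bd ε‖ + ‖l‖ * (ε⁻¹ * ‖Cd ε‖) := by ring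
  · exact fun ε hε => icAdd (hBcomm ε hε) (icSmul l (hCcomm ε hε))
  · rw [← tendsto_iff_norm_sub_tendsto_zero]
    have tB := (tendsto_iff_norm_sub_tendsto_zero).mpr hBtend
    have tC := (tendsto_iff_norm_sub_tendsto_zero).mpr hCtend
    exact tB.add (tC.const_smul l)
  · exact fun ε hε => (hBd1 ε hε).add ((hCd1 ε hε).const_smul l)
  · exact hBd1c.add (hCd1c.const_smul l)
  · refine intOnDom (hBd1i.add (hCd1i.const_mul ‖l‖)) ?_ ?_
    · exact ((hBd1c.add (hCd1c.const_smul l)).norm).aestronglyMeasurable measurableSet_Ioc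
    · intro ε hε
      simp only [Pi.add_apply]
      rw [Real.norm_of_nonneg (norm_nonneg _)]
      refine (norm_add_le _ _).trans ?_
      rw [norm_smul]
  · exact fun ε hε => icAdd (hB2comm ε hε) (icSmul l (hC2comm ε hε))
  · refine intOnDom (hB2i.add (hC2i.const_mul ‖l‖)) ?_ ?_
    · refine normMeas hA (adP := fun ε => adBf ε + l • adCf ε) ?_ ?_
      · have hadBfc : ContinuousOn adBf (Ioc (0:ℝ) ε₀) :=
          fun ε hε => (hBd1 ε hε).continuousWithinAt
        have hadCfc : ContinuousOn adCf (Ioc (0:ℝ) ε₀) :=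
          fun ε hε => (hCd1 ε hε).continuousWithinAt
        exact hadBfc.add (hadCfc.const_smul l)
      · exact fun ε hε => icAdd (hB2comm ε hε) (icSmul l (hC2comm ε hε))
    · intro ε hε
      simp only [Pi.add_apply]
      rw [Real.norm_of_nonneg (norm_nonneg _)]
      refine (norm_add_le _ _).trans ?_
      rw [norm_smul]

noncomputable def SLmap : (H →L[ℂ] H) →L[ℝ] (H →L[ℂ] H) :=
  ((starL' ℝ : (H →L[ℂ] H) ≃L[ℝ] (H →L[ℂ] H)) : (H →L[ℂ] H) →L[ℝ] (H →L[ℂ] H))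

lemma SLmap_apply (T : H →L[ℂ] H) : SLmap T = star T := rfl

lemma starDeriv {Bf Bd : ℝ → H →L[ℂ] H} {s : Set ℝ} {ε : ℝ}
    (h : HasDerivWithinAt Bf (Bd ε) s ε) :
    HasDerivWithinAt (fun x => star (Bf x)) (star (Bd ε)) s ε := by
  have := (SLmap.hasFDerivAt (x := Bf ε)).comp_hasDerivWithinAt ε h
  exact this

lemma starCont {Bf : ℝ → H →L[ℂ] H} {s : Set ℝ} (h : ContinuousOn Bf s) :
    ContinuousOn (fun x => star (Bf x)) s := continuous_star.comp_continuousOn h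

lemma memCclassStar (hB : MemCclass A B) : MemCclass A (star B) := by
  obtain ⟨adB, hadB, ε₀B, Bf, hBf⟩ := hB
  obtain ⟨adBf, ad2Bf, ⟨⟨hpos, ⟨cB, hcBpos, hcB⟩, Bd, hBd, hBdc, hBdi⟩, hBcomm, hBtend,
    Bd1, hBd1, hBd1c, hBd1i⟩, hB2comm, hB2i⟩ := hBf
  refine ⟨-(star adB), icStar hadB, ε₀B, fun ε => star (Bf ε),
    fun ε => -(star (adBf ε)), fun ε => star (ad2Bf ε),
    ⟨⟨hpos, ⟨cB, hcBpos, ?_⟩, fun ε => star (Bd ε), fun ε hε => starDeriv (hBd ε hε),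
      starCont hBdc, ?_⟩, fun ε hε => icStar (hBcomm ε hε), ?_,
      fun ε => -(star (Bd1 ε)), fun ε hε => (starDeriv (hBd1 ε hε)).neg, ?_, ?_⟩,
    fun ε hε => by simpa only [neg_neg] using icNeg (icStar (hB2comm ε hε)), ?_⟩
  · intro ε hε
    have h' : star (Bf ε) - star B = star (Bf ε - B) := (star_sub _ _).symm
    rw [h', norm_star]; exact hcB ε hε
  · simpa only [norm_star] using hBdi
  · have heq : (fun ε => ‖-(star (adBf ε)) - -(star adB)‖) = fun ε => ‖adBf ε - adB‖ :=
      funext fun ε => by rw [neg_sub_neg, ← star_sub, norm_star, norm_sub_rev]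
    rw [heq]; exact hBtend
  · exact (starCont hBd1c).neg
  · simpa only [norm_neg, norm_star] using hBd1i
  · simpa only [norm_star] using hB2i

lemma nmr {X Y : H →L[ℂ] H} {m : ℝ} (h : ‖Y‖ ≤ m) : ‖X * Y‖ ≤ m * ‖X‖ := by
  calc ‖X * Y‖ ≤ ‖X‖ * ‖Y‖ := norm_mul_le _ _
  _ ≤ ‖X‖ * m := mul_le_mul_of_nonneg_left h (norm_nonneg _)
  _ = m * ‖X‖ := mul_comm _ _

lemma nml {X Y : H →L[ℂ] H} {m : ℝ} (h : ‖X‖ ≤ m) : ‖X * Y‖ ≤ m * ‖Y‖ := by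
  calc ‖X * Y‖ ≤ ‖X‖ * ‖Y‖ := norm_mul_le _ _
  _ ≤ m * ‖Y‖ := mul_le_mul_of_nonneg_right h (norm_nonneg _)

set_option maxHeartbeats 2000000 in
lemma memCclassMul (hA : IsSelfAdjoint A) (hB : MemCclass A B) (hC : MemCclass A C) :
    MemCclass A (B * C) := by
  obtain ⟨adB, hadB, ε₀B, Bf, hBf⟩ := hB
  obtain ⟨adC, hadC, ε₀C, Cf, hCf⟩ := hC
  have hposB : 0 < ε₀B := by obtain ⟨_, _, h, _, _⟩ := hBf; exact h.1.1
  have hposC : 0 < ε₀C := by obtain ⟨_, _, h, _, _⟩ := hCf; exact h.1.1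
  set ε₀ := min ε₀B ε₀C with hε₀
  have hpos : 0 < ε₀ := lt_min hposB hposC
  replace hBf := memA2shrink hBf hpos (min_le_left _ _)
  replace hCf := memA2shrink hCf hpos (min_le_right _ _)
  obtain ⟨adBf, ad2Bf, ⟨⟨_, ⟨cB, hcBpos, hcB⟩, Bd, hBd, hBdc, hBdi⟩, hBcomm, hBtend,
    Bd1, hBd1, hBd1c, hBd1i⟩, hB2comm, hB2i⟩ := hBf
  obtain ⟨adCf, ad2Cf, ⟨⟨_, ⟨cC, hcCpos, hcC⟩, Cd, hCd, hCdc, hCdi⟩, hCcomm, hCtend,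
    Cd1, hCd1, hCd1c, hCd1i⟩, hC2comm, hC2i⟩ := hCf
  have hBfc : ContinuousOn Bf (Ioc (0:ℝ) ε₀) := fun ε hε => (hBd ε hε).continuousWithinAt
  have hCfc : ContinuousOn Cf (Ioc (0:ℝ) ε₀) := fun ε hε => (hCd ε hε).continuousWithinAt
  have hadBfc : ContinuousOn adBf (Ioc (0:ℝ) ε₀) := fun ε hε => (hBd1 ε hε).continuousWithinAt
  have hadCfc : ContinuousOn adCf (Ioc (0:ℝ) ε₀) := fun ε hε => (hCd1 ε hε).continuousWithinAt
  set MB := ‖B‖ + cB * ε₀ with hMBdef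
  set MC := ‖C‖ + cC * ε₀ with hMCdef
  have hMB : ∀ ε ∈ Ioc (0:ℝ) ε₀, ‖Bf ε‖ ≤ MB := normBddOfLin hcB
  have hMC : ∀ ε ∈ Ioc (0:ℝ) ε₀, ‖Cf ε‖ ≤ MC := normBddOfLin hcC
  have hMBnn : 0 ≤ MB := by
    have := norm_nonneg B; rw [hMBdef]; nlinarith
  have hMCnn : 0 ≤ MC := by
    have := norm_nonneg C; rw [hMCdef]; nlinarith
  obtain ⟨MaB, hMaBnn, hMaB⟩ := bddOfTendsto hadBfc hBtend
  obtain ⟨MaC, hMaCnn, hMaC⟩ := bddOfTendsto hadCfc hCtend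
  have hBdi' : IntegrableOn (fun ε => ‖Bd ε‖) (Ioc (0:ℝ) ε₀) := by
    refine intOnDom (hBdi.const_mul ε₀) (hBdc.norm.aestronglyMeasurable measurableSet_Ioc) ?_
    intro ε hε
    rw [Real.norm_of_nonneg (norm_nonneg _)]
    have h1 : (1:ℝ) ≤ ε₀ * ε⁻¹ := by
      rw [← div_eq_mul_inv, le_div_iff₀ hε.1]; simpa using hε.2
    nlinarith [norm_nonneg (Bd ε)]
  have hCdi' : IntegrableOn (fun ε => ‖Cd ε‖) (Ioc (0:ℝ) ε₀) := by
    refine intOnDom (hCdi.const_mul ε₀) (hCdc.norm.aestronglyMeasurable measurableSet_Ioc) ?_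
    intro ε hε
    rw [Real.norm_of_nonneg (norm_nonneg _)]
    have h1 : (1:ℝ) ≤ ε₀ * ε⁻¹ := by
      rw [← div_eq_mul_inv, le_div_iff₀ hε.1]; simpa using hε.2
    nlinarith [norm_nonneg (Cd ε)]
  refine ⟨adB * C + B * adC, icMul hA hadB hadC, ε₀, fun ε => Bf ε * Cf ε,
    fun ε => adBf ε * Cf ε + Bf ε * adCf ε,
    fun ε => (ad2Bf ε * Cf ε + adBf ε * adCf ε) + (adBf ε * adCf ε + Bf ε * ad2Cf ε),
    ⟨⟨hpos, ⟨cB * MC + ‖B‖ * cC + 1, by nlinarith [norm_nonneg B], ?_⟩,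
      fun ε => Bd ε * Cf ε + Bf ε * Cd ε, fun ε hε => (hBd ε hε).mul (hCd ε hε), ?_, ?_⟩,
      fun ε hε => icMul hA (hBcomm ε hε) (hCcomm ε hε), ?_,
      fun ε => (Bd1 ε * Cf ε + adBf ε * Cd ε) + (Bd ε * adCf ε + Bf ε * Cd1 ε),
      fun ε hε => ((hBd1 ε hε).mul (hCd ε hε)).add ((hBd ε hε).mul (hCd1 ε hε)), ?_, ?_⟩,
    ?_, ?_⟩
  · -- linear bound
    intro ε hε
    have key : Bf ε * Cf ε - B * C = (Bf ε - B) * Cf ε + B * (Cf ε - C) := by noncomm_ring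
    calc ‖Bf ε * Cf ε - B * C‖ = ‖(Bf ε - B) * Cf ε + B * (Cf ε - C)‖ := by rw [key]
    _ ≤ ‖(Bf ε - B) * Cf ε‖ + ‖B * (Cf ε - C)‖ := norm_add_le _ _
    _ ≤ MC * ‖Bf ε - B‖ + ‖B‖ * ‖Cf ε - C‖ := add_le_add (nmr (hMC ε hε)) (norm_mul_le _ _)
    _ ≤ MC * (cB * ε) + ‖B‖ * (cC * ε) := by
        have h1 := hcB ε hε; have h2 := hcC ε hε
        have := norm_nonneg B
        nlinarith [norm_nonneg (Bf ε - B), norm_nonneg (Cf ε - C)]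
    _ ≤ (cB * MC + ‖B‖ * cC + 1) * ε := by nlinarith [hε.1]
  · exact (hBdc.mul hCfc).add (hBfc.mul hCdc)
  · -- integrability of ε⁻¹ ‖Pd‖
    refine intOnDom ((hBdi.const_mul MC).add (hCdi.const_mul MB)) ?_ ?_
    · exact (contOnInv.mul ((hBdc.mul hCfc).add (hBfc.mul hCdc)).norm).aestronglyMeasurable
        measurableSet_Ioc
    · intro ε hε
      simp only [Pi.add_apply]
      rw [Real.norm_of_nonneg (mul_nonneg (inv_nonneg.mpr hε.1.le) (norm_nonneg _))]
      have h1 : ‖Bd ε * Cf ε + Bf ε * Cd ε‖ ≤ MC * ‖Bd ε‖ + MB * ‖Cd ε‖ :=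
        (norm_add_le _ _).trans (add_le_add (nmr (hMC ε hε)) (nml (hMB ε hε)))
      have h2 : (0:ℝ) ≤ ε⁻¹ := inv_nonneg.mpr hε.1.le
      calc ε⁻¹ * ‖Bd ε * Cf ε + Bf ε * Cd ε‖ ≤ ε⁻¹ * (MC * ‖Bd ε‖ + MB * ‖Cd ε‖) :=
            mul_le_mul_of_nonneg_left h1 h2
      _ = MC * (ε⁻¹ * ‖Bd ε‖) + MB * (ε⁻¹ * ‖Cd ε‖) := by ring
  · -- tendsto of commutators
    rw [← tendsto_iff_norm_sub_tendsto_zero]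
    have tB := (tendsto_iff_norm_sub_tendsto_zero).mpr (tendstoOfLin hcB)
    have tC := (tendsto_iff_norm_sub_tendsto_zero).mpr (tendstoOfLin hcC)
    have tadB := (tendsto_iff_norm_sub_tendsto_zero).mpr hBtend
    have tadC := (tendsto_iff_norm_sub_tendsto_zero).mpr hCtend
    exact (tadB.mul tC).add (tB.mul tadC)
  · -- continuity of Pd1
    exact ((hBd1c.mul hCfc).add (hadBfc.mul hCdc)).add ((hBdc.mul hadCfc).add (hBfc.mul hCd1c))
  · -- integrability of ‖Pd1‖
    refine intOnDom (((hBd1i.const_mul MC).add (hCdi'.const_mul MaB)).add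
      ((hBdi'.const_mul MaC).add (hCd1i.const_mul MB))) ?_ ?_
    · exact (((hBd1c.mul hCfc).add (hadBfc.mul hCdc)).add
        ((hBdc.mul hadCfc).add (hBfc.mul hCd1c))).norm.aestronglyMeasurable measurableSet_Ioc
    · intro ε hε
      simp only [Pi.add_apply]
      rw [Real.norm_of_nonneg (norm_nonneg _)]
      have h1 : ‖Bd1 ε * Cf ε + adBf ε * Cd ε‖ ≤ MC * ‖Bd1 ε‖ + MaB * ‖Cd ε‖ :=
        (norm_add_le _ _).trans (add_le_add (nmr (hMC ε hε)) (nml (hMaB ε hε)))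
      have h2 : ‖Bd ε * adCf ε + Bf ε * Cd1 ε‖ ≤ MaC * ‖Bd ε‖ + MB * ‖Cd1 ε‖ :=
        (norm_add_le _ _).trans (add_le_add (nmr (hMaC ε hε)) (nml (hMB ε hε)))
      exact (norm_add_le _ _).trans (add_le_add h1 h2)
  · -- ad2 commutators
    intro ε hε
    exact icAdd (icMul hA (hB2comm ε hε) (hCcomm ε hε)) (icMul hA (hBcomm ε hε) (hC2comm ε hε))
  · -- ad2 integrability
    have hconst : IntegrableOn (fun _ : ℝ => MaB * MaC) (Ioc (0:ℝ) ε₀) :=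
      integrableOn_const measure_Ioc_lt_top.ne
    refine intOnDom (((hB2i.const_mul MC).add hconst).add
      (hconst.add (hC2i.const_mul MB))) ?_ ?_
    · refine normMeas hA (adP := fun ε => adBf ε * Cf ε + Bf ε * adCf ε) ?_ ?_
      · exact (hadBfc.mul hCfc).add (hBfc.mul hadCfc)
      · intro ε hε
        exact icAdd (icMul hA (hB2comm ε hε) (hCcomm ε hε))
          (icMul hA (hBcomm ε hε) (hC2comm ε hε))
    · intro ε hε
      simp only [Pi.add_apply]
      rw [Real.norm_of_nonneg (norm_nonneg _)]
      have hbb : ‖adBf ε * adCf ε‖ ≤ MaB * MaC := by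
        calc ‖adBf ε * adCf ε‖ ≤ ‖adBf ε‖ * ‖adCf ε‖ := norm_mul_le _ _
        _ ≤ MaB * MaC := mul_le_mul (hMaB ε hε) (hMaC ε hε) (norm_nonneg _) hMaBnn
      have h1 : ‖ad2Bf ε * Cf ε + adBf ε * adCf ε‖ ≤ MC * ‖ad2Bf ε‖ + MaB * MaC :=
        (norm_add_le _ _).trans (add_le_add (nmr (hMC ε hε)) hbb)
      have h2 : ‖adBf ε * adCf ε + Bf ε * ad2Cf ε‖ ≤ MaB * MaC + MB * ‖ad2Cf ε‖ :=
        (norm_add_le _ _).trans (add_le_add hbb (nml (hMB ε hε)))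
      exact (norm_add_le _ _).trans (add_le_add h1 h2)

end Aux

/-- If `B` and `C` belong to the class `C(A)`, then so do `BC`, `B + λC` and `B*`. -/
theorem stmt_16 (A : H →ₗ.[ℂ] H) (hA : IsSelfAdjoint A)
    (B C : H →L[ℂ] H) (hB : MemCclass A B) (hC : MemCclass A C) (l : ℂ) :
    MemCclass A (B * C) ∧ MemCclass A (B + l • C) ∧ MemCclass A (star B) := by
  exact ⟨memCclassMul hA hB hC, memCclassAdd hB hC hA l, memCclassStar hB⟩
end

section
/- (Abstract compactness propagation) Let H be a complex Hilbert space, T > 0, and let U, U_0 : [0,T] → B(H) be strongly continuous families of unitary operators such that there exists C > 0 with ‖U(t)*U_0(t) − U(s)*U_0(s)‖ ≤ C|t − s| for all s, t ∈ [0,T]. Let t ↦ W_t be a strongly continuous family of bounded operators on H such that for all (s,t) ∈ [0,T]^2 the strongly convergent integral ∫_s^t U_0(τ)* W_τ U_0(τ) dτ is a compact operator. Then the strongly convergent integral ∫_0^T U(τ)* W_τ U(τ) dτ is also a compact operator. -/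
open Set MeasureTheory intervalIntegral Filter

variable {H : Type} [NormedAddCommGroup H] [InnerProductSpace ℂ H] [CompleteSpace H]

set_option linter.unusedSectionVars false

lemma unitary_norm_le {u : H →L[ℂ] H} (hu : u ∈ unitary (H →L[ℂ] H)) : ‖u‖ ≤ 1 :=
  u.opNorm_le_bound zero_le_one fun x => by
    rw [u.norm_map_of_mem_unitary hu, one_mul]

lemma aux_comp_cont {s : Set ℝ} (V : ℝ → (H →L[ℂ] H)) (K : ℝ)
    (hK : ∀ t ∈ s, ‖V t‖ ≤ K)
    (hVc : ∀ x : H, ContinuousOn (fun t => V t x) s)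
    {z : ℝ → H} (hz : ContinuousOn z s) :
    ContinuousOn (fun t => V t (z t)) s := by
  intro a ha
  have h1 : Tendsto (fun t => K * ‖z t - z a‖ + ‖V t (z a) - V a (z a)‖)
      (nhdsWithin a s) (nhds 0) := by
    have hz' : Tendsto (fun t => ‖z t - z a‖) (nhdsWithin a s) (nhds 0) :=
      tendsto_iff_norm_sub_tendsto_zero.mp (hz a ha)
    have hV' : Tendsto (fun t => ‖V t (z a) - V a (z a)‖) (nhdsWithin a s) (nhds 0) :=
      tendsto_iff_norm_sub_tendsto_zero.mp (hVc (z a) a ha)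
    have := (hz'.const_mul K).add hV'
    simpa using this
  rw [ContinuousWithinAt, tendsto_iff_norm_sub_tendsto_zero]
  apply squeeze_zero' (Eventually.of_forall fun t => norm_nonneg _) ?_ h1
  filter_upwards [self_mem_nhdsWithin] with t ht
  calc ‖V t (z t) - V a (z a)‖
      ≤ ‖V t (z t) - V t (z a)‖ + ‖V t (z a) - V a (z a)‖ :=
        norm_sub_le_norm_sub_add_norm_sub _ _ _
    _ ≤ K * ‖z t - z a‖ + ‖V t (z a) - V a (z a)‖ := by
        gcongr ?_ + _
        rw [← map_sub]
        calc ‖V t (z t - z a)‖ ≤ ‖V t‖ * ‖z t - z a‖ := (V t).le_opNorm _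
          _ ≤ K * ‖z t - z a‖ := mul_le_mul_of_nonneg_right (hK t ht) (norm_nonneg _)

lemma aux_star_cont {T : ℝ} (V : ℝ → (H →L[ℂ] H))
    (hVu : ∀ t ∈ Icc (0:ℝ) T, V t ∈ unitary (H →L[ℂ] H))
    (hVc : ∀ x : H, ContinuousOn (fun t => V t x) (Icc (0:ℝ) T)) (y : H) :
    ContinuousOn (fun t => star (V t) y) (Icc (0:ℝ) T) := by
  intro a ha
  set h : ℝ → H := fun t => star (V t) y with hh
  have hnorm : ∀ t ∈ Icc (0:ℝ) T, ‖h t‖ = ‖y‖ := fun t ht =>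
    ContinuousLinearMap.norm_map_of_mem_unitary (Unitary.star_mem (hVu t ht)) y
  have key : ∀ t ∈ Icc (0:ℝ) T, ‖h t - h a‖ ^ 2
      = 2 * ‖y‖ ^ 2 - 2 * RCLike.re (inner ℂ y ((V t) (h a)) : ℂ) := by
    intro t ht
    have e1 : (inner ℂ (h t) (h a) : ℂ) = inner ℂ y ((V t) (h a)) := by
      rw [hh]
      simp only
      rw [ContinuousLinearMap.star_eq_adjoint, ContinuousLinearMap.adjoint_inner_left]
    rw [@norm_sub_sq ℂ, e1, hnorm t ht, hnorm a ha]
    ring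
  have hlim : Tendsto (fun t => ‖h t - h a‖ ^ 2) (nhdsWithin a (Icc (0:ℝ) T)) (nhds 0) := by
    have hc : Tendsto (fun t => (V t) (h a)) (nhdsWithin a (Icc (0:ℝ) T))
        (nhds ((V a) (h a))) := hVc (h a) a ha
    have hre : Tendsto (fun t => RCLike.re (inner ℂ y ((V t) (h a)) : ℂ))
        (nhdsWithin a (Icc (0:ℝ) T))
        (nhds (RCLike.re (inner ℂ y ((V a) (h a)) : ℂ))) := by
      exact (RCLike.continuous_re.tendsto _).comp (((innerSL ℂ y).continuous.tendsto _).comp hc)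
    have hval : RCLike.re (inner ℂ y ((V a) (h a)) : ℂ) = ‖y‖ ^ 2 := by
      have e2 : (inner ℂ y ((V a) (h a)) : ℂ) = inner ℂ (h a) (h a) := by
        rw [hh]
        simp only
        rw [ContinuousLinearMap.star_eq_adjoint, ContinuousLinearMap.adjoint_inner_left]
      rw [e2, inner_self_eq_norm_sq, hnorm a ha]
    rw [hval] at hre
    have := ((tendsto_const_nhds (x := 2 * ‖y‖ ^ 2)).sub (hre.const_mul 2))
    have heq : Tendsto (fun t => 2 * ‖y‖ ^ 2 - 2 * RCLike.re (inner ℂ y ((V t) (h a)) : ℂ))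
        (nhdsWithin a (Icc (0:ℝ) T)) (nhds 0) := by
      simpa [sub_self] using this
    apply heq.congr'
    filter_upwards [self_mem_nhdsWithin] with t ht
    exact (key t ht).symm
  rw [ContinuousWithinAt, tendsto_iff_norm_sub_tendsto_zero]
  have := hlim.sqrt
  simp only [Real.sqrt_zero] at this
  apply this.congr
  intro t
  exact Real.sqrt_sq (norm_nonneg _)

lemma aux_exists_intOp (g : ℝ → (H →L[ℂ] H)) (a b : ℝ) (C : ℝ) (hC : 0 ≤ C)
    (hInt : ∀ x : H, IntervalIntegrable (fun τ => g τ x) volume a b)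
    (hbound : ∀ τ ∈ uIoc a b, ‖g τ‖ ≤ C) :
    ∃ X : H →L[ℂ] H, ∀ x : H, X x = ∫ τ in a..b, g τ x := by
  refine ⟨LinearMap.mkContinuous
    { toFun := fun x => ∫ τ in a..b, g τ x
      map_add' := fun x y => by
        simp only [map_add]
        exact intervalIntegral.integral_add (hInt x) (hInt y)
      map_smul' := fun c x => by
        simp only [_root_.map_smul, RingHom.id_apply]
        exact intervalIntegral.integral_smul c fun τ => g τ x }
    (C * |b - a|) (fun x => ?_), fun x => rfl⟩
  simp only [LinearMap.coe_mk, AddHom.coe_mk]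
  calc ‖∫ τ in a..b, g τ x‖ ≤ C * ‖x‖ * |b - a| := by
        apply intervalIntegral.norm_integral_le_of_norm_le_const
        intro τ hτ
        calc ‖g τ x‖ ≤ ‖g τ‖ * ‖x‖ := (g τ).le_opNorm x
          _ ≤ C * ‖x‖ := mul_le_mul_of_nonneg_right (hbound τ hτ) (norm_nonneg _)
    _ = C * |b - a| * ‖x‖ := by ring

/-- Abstract compactness propagation: let `U, U₀ : [0,T] → B(H)` be strongly continuous
families of unitary operators with `‖U(t)*U₀(t) − U(s)*U₀(s)‖ ≤ C|t−s|`, and let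
`t ↦ W_t` be a strongly continuous family of bounded operators such that every strong
integral `∫_s^t U₀(τ)* W_τ U₀(τ) dτ` is compact.  Then the strong integral
`∫_0^T U(τ)* W_τ U(τ) dτ` is compact. -/
theorem stmt_19 (T : ℝ) (hT : 0 < T) (U U₀ : ℝ → (H →L[ℂ] H))
    (hUu : ∀ t ∈ Icc (0:ℝ) T, U t ∈ unitary (H →L[ℂ] H))
    (hU₀u : ∀ t ∈ Icc (0:ℝ) T, U₀ t ∈ unitary (H →L[ℂ] H))
    (hUcont : ∀ x : H, ContinuousOn (fun t => U t x) (Icc (0:ℝ) T))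
    (hU₀cont : ∀ x : H, ContinuousOn (fun t => U₀ t x) (Icc (0:ℝ) T))
    (hLip : ∃ c : ℝ, 0 < c ∧ ∀ s ∈ Icc (0:ℝ) T, ∀ t ∈ Icc (0:ℝ) T,
      ‖star (U t) * U₀ t - star (U s) * U₀ s‖ ≤ c * |t - s|)
    (W : ℝ → (H →L[ℂ] H))
    (hWcont : ∀ x : H, ContinuousOn (fun t => W t x) (Icc (0:ℝ) T))
    (hcompact : ∀ s ∈ Icc (0:ℝ) T, ∀ t ∈ Icc (0:ℝ) T, ∀ X : H →L[ℂ] H,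
      (∀ x : H, X x = ∫ τ in s..t, (star (U₀ τ)) ((W τ) ((U₀ τ) x))) →
        IsCompactOperator X) :
    ∀ Y : H →L[ℂ] H,
      (∀ x : H, Y x = ∫ τ in (0:ℝ)..T, (star (U τ)) ((W τ) ((U τ) x))) →
        IsCompactOperator Y := by
  intro Y hY
  obtain ⟨c, hc, hlip⟩ := hLip
  -- uniform bound on ‖W t‖
  obtain ⟨M, hM0, hMW⟩ : ∃ M : ℝ, 0 ≤ M ∧ ∀ t ∈ Icc (0:ℝ) T, ‖W t‖ ≤ M := by
    have hptw : ∀ x : H, ∃ C, ∀ i : Icc (0:ℝ) T, ‖(fun i : Icc (0:ℝ) T => W i) i x‖ ≤ C := by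
      intro x
      obtain ⟨C, hC⟩ := isCompact_Icc.exists_bound_of_continuousOn (hWcont x)
      exact ⟨C, fun i => hC i i.2⟩
    obtain ⟨C', hC'⟩ := banach_steinhaus hptw
    exact ⟨max C' 0, le_max_right _ _, fun t ht => le_max_of_le_left (hC' ⟨t, ht⟩)⟩
  set A : ℝ → (H →L[ℂ] H) := fun t => star (U t) * U₀ t with hAdef
  have hAu : ∀ t ∈ Icc (0:ℝ) T, A t ∈ unitary (H →L[ℂ] H) := fun t ht =>
    mul_mem (Unitary.star_mem (hUu t ht)) (hU₀u t ht)
  have hAlip : ∀ s ∈ Icc (0:ℝ) T, ∀ t ∈ Icc (0:ℝ) T, ‖A t - A s‖ ≤ c * |t - s| :=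
    fun s hs t ht => hlip s hs t ht
  set G : ℝ → (H →L[ℂ] H) := fun τ => (star (U₀ τ)).comp ((W τ).comp (U₀ τ)) with hGdef
  have hGapp : ∀ τ x, G τ x = (star (U₀ τ)) ((W τ) ((U₀ τ) x)) := fun τ x => rfl
  have hGnorm : ∀ τ ∈ Icc (0:ℝ) T, ∀ z : H, ‖G τ z‖ ≤ M * ‖z‖ := by
    intro τ hτ z
    rw [hGapp]
    rw [ContinuousLinearMap.norm_map_of_mem_unitary (Unitary.star_mem (hU₀u τ hτ))]
    calc ‖(W τ) ((U₀ τ) z)‖ ≤ ‖W τ‖ * ‖(U₀ τ) z‖ := (W τ).le_opNorm _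
      _ ≤ M * ‖z‖ := by
          rw [ContinuousLinearMap.norm_map_of_mem_unitary (hU₀u τ hτ)]
          exact mul_le_mul_of_nonneg_right (hMW τ hτ) (norm_nonneg _)
  have hGopnorm : ∀ τ ∈ Icc (0:ℝ) T, ‖G τ‖ ≤ M := fun τ hτ =>
    (G τ).opNorm_le_bound hM0 (hGnorm τ hτ)
  have hGcont : ∀ x : H, ContinuousOn (fun τ => G τ x) (Icc (0:ℝ) T) := by
    intro x
    have s1 : ContinuousOn (fun τ => (U₀ τ) x) (Icc (0:ℝ) T) := hU₀cont x
    have s2 : ContinuousOn (fun τ => (W τ) ((U₀ τ) x)) (Icc (0:ℝ) T) :=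
      aux_comp_cont W M hMW hWcont s1
    exact aux_comp_cont (fun τ => star (U₀ τ)) 1
      (fun t ht => unitary_norm_le (Unitary.star_mem (hU₀u t ht)))
      (aux_star_cont U₀ hU₀u hU₀cont) s2
  have hFcont : ∀ x : H,
      ContinuousOn (fun τ => (star (U τ)) ((W τ) ((U τ) x))) (Icc (0:ℝ) T) := by
    intro x
    have s1 : ContinuousOn (fun τ => (U τ) x) (Icc (0:ℝ) T) := hUcont x
    have s2 : ContinuousOn (fun τ => (W τ) ((U τ) x)) (Icc (0:ℝ) T) :=
      aux_comp_cont W M hMW hWcont s1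
    exact aux_comp_cont (fun τ => star (U τ)) 1
      (fun t ht => unitary_norm_le (Unitary.star_mem (hUu t ht)))
      (aux_star_cont U hUu hUcont) s2
  -- factorization identity
  have hfact : ∀ τ ∈ Icc (0:ℝ) T, ∀ x : H,
      (star (U τ)) ((W τ) ((U τ) x)) = (A τ) ((G τ) ((star (A τ)) x)) := by
    intro τ hτ x
    have hstarA : (star (A τ) : H →L[ℂ] H) = star (U₀ τ) * U τ := by
      rw [hAdef]
      simp only
      rw [star_mul, star_star]
    have e1 : (star (A τ)) x = (star (U₀ τ)) ((U τ) x) := by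
      rw [hstarA]; rfl
    rw [e1, hGapp]
    have e2 : (U₀ τ) ((star (U₀ τ)) ((U τ) x)) = (U τ) x := by
      have h1 := Unitary.mul_star_self_of_mem (hU₀u τ hτ)
      calc (U₀ τ) ((star (U₀ τ)) ((U τ) x)) = ((U₀ τ) * (star (U₀ τ))) ((U τ) x) := rfl
        _ = (U τ) x := by rw [h1]; rfl
    rw [e2]
    have e3 : (A τ) ((star (U₀ τ)) ((W τ) ((U τ) x)))
        = (star (U τ)) (((U₀ τ) * (star (U₀ τ))) ((W τ) ((U τ) x))) := rfl
    rw [e3, Unitary.mul_star_self_of_mem (hU₀u τ hτ)]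
    rfl
  have key : ∀ n : ℕ, ∃ Z : H →L[ℂ] H, IsCompactOperator Z ∧
      ‖Y - Z‖ ≤ 2 * c * M * T ^ 2 / (n + 1) := by
    intro n
    set m : ℕ := n + 1 with hm
    have hm0 : (0:ℝ) < m := by positivity
    set δ : ℝ := T / m with hδdef
    have hδ : 0 < δ := div_pos hT hm0
    set p : ℕ → ℝ := fun i => i * δ with hpdef
    have hp0 : p 0 = 0 := by simp [hpdef]
    have hpm : p m = T := by
      rw [hpdef]; simp only [hδdef]; field_simp
    have hpstep : ∀ i : ℕ, p (i + 1) - p i = δ := by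
      intro i; rw [hpdef]; simp only; push_cast; ring
    have hpmono : ∀ i : ℕ, p i ≤ p (i + 1) := fun i => by
      have := hpstep i; linarith
    have hpIcc : ∀ i ≤ m, p i ∈ Icc (0:ℝ) T := by
      intro i hi
      constructor
      · rw [hpdef]; positivity
      · rw [← hpm, hpdef]; simp only
        exact mul_le_mul_of_nonneg_right (Nat.cast_le.mpr hi) hδ.le
    have hsub : ∀ i < m, Icc (p i) (p (i+1)) ⊆ Icc (0:ℝ) T := by
      intro i hi
      exact Icc_subset_Icc (hpIcc i (le_of_lt hi)).1 (hpIcc (i+1) hi).2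
    have hGint : ∀ i < m, ∀ x : H,
        IntervalIntegrable (fun τ => G τ x) volume (p i) (p (i+1)) := by
      intro i hi x
      apply ContinuousOn.intervalIntegrable
      apply (hGcont x).mono
      rw [uIcc_of_le (hpmono i)]
      exact hsub i hi
    have hXex : ∀ i < m, ∃ X : H →L[ℂ] H, ∀ x : H, X x = ∫ τ in p i..p (i+1), G τ x := by
      intro i hi
      apply aux_exists_intOp G (p i) (p (i+1)) M hM0 (hGint i hi)
      intro τ hτ
      apply hGopnorm
      apply hsub i hi
      apply mem_Icc_of_Ioc
      rwa [uIoc_of_le (hpmono i)] at hτ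
    choose! X hX using hXex
    have hXc : ∀ i < m, IsCompactOperator (X i) := by
      intro i hi
      exact hcompact (p i) (hpIcc i hi.le) (p (i+1)) (hpIcc (i+1) hi) (X i) (hX i hi)
    refine ⟨∑ i ∈ Finset.range m, (A (p i)).comp ((X i).comp (star (A (p i)))), ?_, ?_⟩
    · -- compactness of the approximant
      have hmem : (∑ i ∈ Finset.range m, (A (p i)).comp ((X i).comp (star (A (p i)))))
          ∈ compactOperator (RingHom.id ℂ) H H := by
        apply Submodule.sum_mem
        intro i hi
        rw [Finset.mem_range] at hi
        show IsCompactOperator ⇑((A (p i)).comp ((X i).comp (star (A (p i)))))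
        have heq : ⇑((A (p i)).comp ((X i).comp (star (A (p i)))))
            = ⇑(A (p i)) ∘ (⇑(X i) ∘ ⇑(star (A (p i)))) := by
          ext x; rfl
        rw [heq]
        exact ((hXc i hi).comp_clm _).clm_comp _
      exact hmem
    · -- norm estimate
      set Z : H →L[ℂ] H := ∑ i ∈ Finset.range m, (A (p i)).comp ((X i).comp (star (A (p i))))
        with hZdef
      have hcast : ((m:ℝ)) = (n:ℝ) + 1 := by rw [hm]; push_cast; ring
      rw [← hcast]
      apply ContinuousLinearMap.opNorm_le_bound _ (by positivity)
      intro x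
      rw [ContinuousLinearMap.sub_apply]
      have hint1 : ∀ i < m, IntervalIntegrable
          (fun τ => (star (U τ)) ((W τ) ((U τ) x))) volume (p i) (p (i+1)) := by
        intro i hi
        apply ContinuousOn.intervalIntegrable
        apply (hFcont x).mono
        rw [uIcc_of_le (hpmono i)]
        exact hsub i hi
      have hint2 : ∀ i < m, IntervalIntegrable
          (fun τ => (A (p i)) ((G τ) ((star (A (p i))) x))) volume (p i) (p (i+1)) := by
        intro i hi
        apply ContinuousOn.intervalIntegrable
        apply ((A (p i)).continuous.comp_continuousOn (hGcont ((star (A (p i))) x))).mono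
        rw [uIcc_of_le (hpmono i)]
        exact hsub i hi
      have hYsum : Y x = ∑ i ∈ Finset.range m, ∫ τ in p i..p (i+1),
          (star (U τ)) ((W τ) ((U τ) x)) := by
        have := intervalIntegral.sum_integral_adjacent_intervals hint1
        rw [hp0, hpm] at this
        rw [hY x, ← this]
      have hZsum : Z x = ∑ i ∈ Finset.range m, ∫ τ in p i..p (i+1),
          (A (p i)) ((G τ) ((star (A (p i))) x)) := by
        rw [hZdef, ContinuousLinearMap.sum_apply]
        apply Finset.sum_congr rfl
        intro i hi
        rw [Finset.mem_range] at hi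
        rw [ContinuousLinearMap.comp_apply, ContinuousLinearMap.comp_apply, hX i hi]
        exact ((A (p i)).intervalIntegral_comp_comm (hGint i hi _)).symm
      have hptbound : ∀ i < m, ∀ τ ∈ uIoc (p i) (p (i+1)),
          ‖(star (U τ)) ((W τ) ((U τ) x)) - (A (p i)) ((G τ) ((star (A (p i))) x))‖
            ≤ 2 * c * M * δ * ‖x‖ := by
        intro i hi τ hτ'
        rw [uIoc_of_le (hpmono i)] at hτ'
        have hτI : τ ∈ Icc (p i) (p (i+1)) := mem_Icc_of_Ioc hτ'
        have hτT : τ ∈ Icc (0:ℝ) T := hsub i hi hτI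
        have hpiT : p i ∈ Icc (0:ℝ) T := hpIcc i hi.le
        have habs : |τ - p i| ≤ δ := by
          rw [abs_of_nonneg (by linarith [hτI.1])]
          have := hpstep i
          linarith [hτI.2]
        rw [hfact τ hτT x]
        set B1 : H := (star (A τ)) x with hB1def
        set B2 : H := (star (A (p i))) x with hB2def
        have hB1 : ‖B1‖ = ‖x‖ :=
          ContinuousLinearMap.norm_map_of_mem_unitary (Unitary.star_mem (hAu τ hτT)) x
        have hAA : ‖A τ - A (p i)‖ ≤ c * δ := by
          calc ‖A τ - A (p i)‖ ≤ c * |τ - p i| := hAlip (p i) hpiT τ hτT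
            _ ≤ c * δ := mul_le_mul_of_nonneg_left habs hc.le
        have hBB : ‖B1 - B2‖ ≤ c * δ * ‖x‖ := by
          have e : B1 - B2 = (star (A τ) - star (A (p i))) x := by
            rw [hB1def, hB2def, ContinuousLinearMap.sub_apply]
          rw [e]
          calc ‖(star (A τ) - star (A (p i))) x‖
              ≤ ‖star (A τ) - star (A (p i))‖ * ‖x‖ := ContinuousLinearMap.le_opNorm _ _
            _ ≤ c * δ * ‖x‖ := by
                rw [← star_sub, norm_star]
                exact mul_le_mul_of_nonneg_right hAA (norm_nonneg _)
        have hGB1 : ‖(G τ) B1‖ ≤ M * ‖x‖ := by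
          rw [← hB1]
          exact hGnorm τ hτT B1
        have t1 : ‖(A τ) ((G τ) B1) - (A (p i)) ((G τ) B1)‖ ≤ c * δ * (M * ‖x‖) := by
          rw [← ContinuousLinearMap.sub_apply]
          calc ‖(A τ - A (p i)) ((G τ) B1)‖
              ≤ ‖A τ - A (p i)‖ * ‖(G τ) B1‖ := ContinuousLinearMap.le_opNorm _ _
            _ ≤ c * δ * (M * ‖x‖) := by
                apply mul_le_mul hAA hGB1 (norm_nonneg _) (by positivity)
        have t2 : ‖(A (p i)) ((G τ) B1) - (A (p i)) ((G τ) B2)‖ ≤ M * (c * δ * ‖x‖) := by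
          rw [← map_sub, ContinuousLinearMap.norm_map_of_mem_unitary (hAu (p i) hpiT),
            ← map_sub]
          calc ‖(G τ) (B1 - B2)‖ ≤ M * ‖B1 - B2‖ := hGnorm τ hτT _
            _ ≤ M * (c * δ * ‖x‖) := mul_le_mul_of_nonneg_left hBB hM0
        calc ‖(A τ) ((G τ) B1) - (A (p i)) ((G τ) B2)‖
            ≤ ‖(A τ) ((G τ) B1) - (A (p i)) ((G τ) B1)‖
              + ‖(A (p i)) ((G τ) B1) - (A (p i)) ((G τ) B2)‖ :=
              norm_sub_le_norm_sub_add_norm_sub _ _ _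
          _ ≤ c * δ * (M * ‖x‖) + M * (c * δ * ‖x‖) := add_le_add t1 t2
          _ = 2 * c * M * δ * ‖x‖ := by ring
      have hiint : ∀ i ∈ Finset.range m,
          ‖(∫ τ in p i..p (i+1), (star (U τ)) ((W τ) ((U τ) x)))
            - ∫ τ in p i..p (i+1), (A (p i)) ((G τ) ((star (A (p i))) x))‖
            ≤ 2 * c * M * δ * ‖x‖ * δ := by
        intro i hi
        rw [Finset.mem_range] at hi
        rw [← intervalIntegral.integral_sub (hint1 i hi) (hint2 i hi)]
        have hb := intervalIntegral.norm_integral_le_of_norm_le_const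
          (C := 2 * c * M * δ * ‖x‖)
          (f := fun τ => (star (U τ)) ((W τ) ((U τ) x))
            - (A (p i)) ((G τ) ((star (A (p i))) x)))
          (a := p i) (b := p (i+1)) ?_
        · calc ‖∫ τ in p i..p (i+1), ((star (U τ)) ((W τ) ((U τ) x))
              - (A (p i)) ((G τ) ((star (A (p i))) x)))‖
              ≤ 2 * c * M * δ * ‖x‖ * |p (i+1) - p i| := hb
            _ = 2 * c * M * δ * ‖x‖ * δ := by
                rw [hpstep i, abs_of_pos hδ]
        · intro τ hτ
          exact hptbound i hi τ hτ
      calc ‖Y x - Z x‖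
          = ‖∑ i ∈ Finset.range m, ((∫ τ in p i..p (i+1), (star (U τ)) ((W τ) ((U τ) x)))
            - ∫ τ in p i..p (i+1), (A (p i)) ((G τ) ((star (A (p i))) x)))‖ := by
            rw [hYsum, hZsum, Finset.sum_sub_distrib]
        _ ≤ ∑ i ∈ Finset.range m, ‖(∫ τ in p i..p (i+1), (star (U τ)) ((W τ) ((U τ) x)))
            - ∫ τ in p i..p (i+1), (A (p i)) ((G τ) ((star (A (p i))) x))‖ :=
            norm_sum_le _ _
        _ ≤ ∑ _i ∈ Finset.range m, 2 * c * M * δ * ‖x‖ * δ := Finset.sum_le_sum hiint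
        _ = m * (2 * c * M * δ * ‖x‖ * δ) := by
            rw [Finset.sum_const, Finset.card_range, nsmul_eq_mul]
        _ = 2 * c * M * T ^ 2 / m * ‖x‖ := by
            rw [hδdef]
            field_simp
  choose Z hZc hZb using key
  have htend : Tendsto Z atTop (nhds Y) := by
    rw [tendsto_iff_dist_tendsto_zero]
    have hb : Tendsto (fun k : ℕ => 2 * c * M * T ^ 2 / ((k:ℝ) + 1)) atTop (nhds 0) := by
      have h1 := (tendsto_const_div_atTop_nhds_zero_nat (2 * c * M * T ^ 2)).comp
        (tendsto_add_atTop_nat 1)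
      have : (fun k : ℕ => 2 * c * M * T ^ 2 / ((k + 1 : ℕ) : ℝ))
          = fun k : ℕ => 2 * c * M * T ^ 2 / ((k:ℝ) + 1) := by
        funext k; push_cast; ring_nf
      rwa [← this]
    apply squeeze_zero (fun k => dist_nonneg) _ hb
    intro k
    rw [dist_eq_norm, norm_sub_rev]
    exact hZb k
  exact isCompactOperator_of_tendsto htend (Eventually.of_forall hZc)
end
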